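/- arXiv:1910.00206 — 3 statements merged into one kernel-verified Lean document; each statement's English description precedes it below -/
import Mathlib

section
/- Let p, q, r be integers with gcd(q, r) = 1. The cyclic sequence v_1 = (1,0), v_2 = (0,1), v_3 = (−1,p), v_4 = (q,r) forms complete fan data of length 4 that is LDP fan data with exactly two singular cones if and only if p ≤ 1 and r ≤ min{−pq−2, −2, −q−1, q−pq−1}. -/
/-- The determinant `det(u, w) = u₁w₂ − u₂w₁` of two integer vectors. -/
def detZ (u w : ℤ × ℤ) : ℤ := u.1 * w.2 - u.2 * w.1

/-- The real vector associated to an integer vector. -/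
noncomputable def toR2 (u : ℤ × ℤ) : ℝ × ℝ := ((u.1 : ℝ), (u.2 : ℝ))

/-- The cone `ℝ_{≥0} u + ℝ_{≥0} w` spanned by two integer vectors. -/
def coneOf (u w : ℤ × ℤ) : Set (ℝ × ℝ) :=
  {x | ∃ a b : ℝ, 0 ≤ a ∧ 0 ≤ b ∧ x = a • toR2 u + b • toR2 w}

/-- Complete fan data of length `d`: a cyclic sequence of primitive integer vectors with
`det(v_i, v_{i+1}) ≥ 1` whose successive cones cover `ℝ²` and have pairwise disjoint
interiors. -/
def IsCompleteFanData (d : ℕ) (v : ZMod d → ℤ × ℤ) : Prop :=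
  3 ≤ d ∧
  (∀ i, Int.gcd (v i).1 (v i).2 = 1) ∧
  (∀ i, 1 ≤ detZ (v i) (v (i + 1))) ∧
  (⋃ i, coneOf (v i) (v (i + 1))) = Set.univ ∧
  ∀ i j, i ≠ j →
    interior (coneOf (v i) (v (i + 1))) ∩ interior (coneOf (v j) (v (j + 1))) = ∅

/-- `f(i) = det(v_{i−1}, v_i) + det(v_i, v_{i+1}) + det(v_{i+1}, v_{i−1})`. -/
def fanF (d : ℕ) (v : ZMod d → ℤ × ℤ) (i : ZMod d) : ℤ :=
  detZ (v (i - 1)) (v i) + detZ (v i) (v (i + 1)) + detZ (v (i + 1)) (v (i - 1))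

/-- LDP fan data: complete fan data with `f(i) ≥ 1` for all `i`. -/
def IsLDPFanData (d : ℕ) (v : ZMod d → ℤ × ℤ) : Prop :=
  IsCompleteFanData d v ∧ ∀ i, 1 ≤ fanF d v i

/-- The number of singular cones, i.e. indices `i` with `det(v_i, v_{i+1}) ≥ 2`. -/
noncomputable def numSingular (d : ℕ) (v : ZMod d → ℤ × ℤ) : ℕ :=
  {i : ZMod d | 2 ≤ detZ (v i) (v (i + 1))}.ncard

/-- Equivalence of fan data: some `GL(2, ℤ)` matrix maps the vector set of one
bijectively onto the vector set of the other. -/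
def FanEquiv {d₁ d₂ : ℕ} (v : ZMod d₁ → ℤ × ℤ) (w : ZMod d₂ → ℤ × ℤ) : Prop :=
  ∃ M : Matrix (Fin 2) (Fin 2) ℤ, IsUnit M.det ∧
    (fun u : ℤ × ℤ => (M 0 0 * u.1 + M 0 1 * u.2, M 1 0 * u.1 + M 1 1 * u.2)) ''
      Set.range v = Set.range w

/-- The cyclic sequence of length `d − 1` obtained by deleting the vector `v_k`:
it lists `v_{k+1}, v_{k+2}, …, v_{k+d−1}`. -/
def deleteAt {d : ℕ} (v : ZMod d → ℤ × ℤ) (k : ZMod d) : ZMod (d - 1) → ℤ × ℤ :=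
  fun i => v (k + 1 + (i.val : ZMod d))

/-- The cyclic sequence of length `d + 1` obtained by inserting `v_k + v_{k+1}`
between `v_k` and `v_{k+1}`. -/
def insertAt {d : ℕ} (v : ZMod d → ℤ × ℤ) (k : ZMod d) : ZMod (d + 1) → ℤ × ℤ :=
  fun i =>
    if i.val ≤ k.val then v ((i.val : ℕ) : ZMod d)
    else if i.val = k.val + 1 then v k + v (k + 1)
    else v ((i.val - 1 : ℕ) : ZMod d)

/-- The data `(1,0), (0,1), (−1,p), (q,r)`. -/
def data4 (p q r : ℤ) : ZMod 4 → ℤ × ℤ := fun i =>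
  if i = 0 then (1, 0) else if i = 1 then (0, 1) else if i = 2 then (-1, p) else (q, r)

/-! ### Auxiliary lemmas -/

lemma mem_coneOf {u w : ℤ × ℤ} (h : 0 < detZ u w) {x : ℝ × ℝ}
    (h1 : 0 ≤ (u.1:ℝ) * x.2 - u.2 * x.1) (h2 : 0 ≤ x.1 * (w.2:ℝ) - x.2 * w.1) :
    x ∈ coneOf u w := by
  have hΔ : (0:ℝ) < ((detZ u w : ℤ) : ℝ) := by exact_mod_cast h
  have hΔ' : ((u.1:ℝ) * w.2 - u.2 * w.1) = ((detZ u w : ℤ) : ℝ) := by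
    simp only [detZ]; push_cast; ring
  refine ⟨(x.1 * (w.2:ℝ) - x.2 * w.1) / ((detZ u w : ℤ) : ℝ),
    ((u.1:ℝ) * x.2 - u.2 * x.1) / ((detZ u w : ℤ) : ℝ),
    div_nonneg h2 hΔ.le, div_nonneg h1 hΔ.le, ?_⟩
  have hne : ((detZ u w : ℤ) : ℝ) ≠ 0 := ne_of_gt hΔ
  have hd : ((detZ u w : ℤ) : ℝ) = (u.1:ℝ) * w.2 - u.2 * w.1 := hΔ'.symm
  ext
  · simp only [Prod.fst_add, Prod.smul_fst, toR2, smul_eq_mul]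
    field_simp
    rw [hd]; ring
  · simp only [Prod.snd_add, Prod.smul_snd, toR2, smul_eq_mul]
    field_simp
    rw [hd]; ring

lemma coneOf_subset₁ {u w : ℤ × ℤ} (h : 0 ≤ detZ u w) :
    coneOf u w ⊆ {x : ℝ × ℝ | 0 ≤ (u.1:ℝ) * x.2 - u.2 * x.1} := by
  rintro x ⟨a, b, ha, hb, rfl⟩
  have hΔ : (0:ℝ) ≤ ((u.1:ℝ) * w.2 - u.2 * w.1) := by
    have : (0:ℝ) ≤ ((detZ u w : ℤ) : ℝ) := by exact_mod_cast h
    simpa [detZ] using this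
  simp only [Set.mem_setOf_eq, Prod.fst_add, Prod.snd_add, Prod.smul_fst, Prod.smul_snd,
    toR2, smul_eq_mul]
  have : (u.1:ℝ) * (a * u.2 + b * w.2) - u.2 * (a * u.1 + b * w.1)
      = b * ((u.1:ℝ) * w.2 - u.2 * w.1) := by ring
  rw [this]
  exact mul_nonneg hb hΔ

lemma coneOf_subset₂ {u w : ℤ × ℤ} (h : 0 ≤ detZ u w) :
    coneOf u w ⊆ {x : ℝ × ℝ | 0 ≤ x.1 * (w.2:ℝ) - x.2 * w.1} := by
  rintro x ⟨a, b, ha, hb, rfl⟩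
  have hΔ : (0:ℝ) ≤ ((u.1:ℝ) * w.2 - u.2 * w.1) := by
    have : (0:ℝ) ≤ ((detZ u w : ℤ) : ℝ) := by exact_mod_cast h
    simpa [detZ] using this
  simp only [Set.mem_setOf_eq, Prod.fst_add, Prod.snd_add, Prod.smul_fst, Prod.smul_snd,
    toR2, smul_eq_mul]
  have : (a * (u.1:ℝ) + b * w.1) * w.2 - (a * u.2 + b * w.2) * w.1
      = a * ((u.1:ℝ) * w.2 - u.2 * w.1) := by ring
  rw [this]
  exact mul_nonneg ha hΔ

lemma interior_half (a b : ℝ) (hab : a ≠ 0 ∨ b ≠ 0) :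
    interior {x : ℝ × ℝ | 0 ≤ a * x.1 + b * x.2} ⊆ {x : ℝ × ℝ | 0 < a * x.1 + b * x.2} := by
  intro x hx
  obtain ⟨ε, hε, hball⟩ := Metric.isOpen_iff.mp isOpen_interior x hx
  have hc : 0 < a ^ 2 + b ^ 2 := by
    rcases hab with h | h
    · positivity
    · positivity
  set δ : ℝ := ε / (2 * (|a| + |b| + 1)) with hδdef
  have habs : (0:ℝ) < |a| + |b| + 1 := by positivity
  have hδ : 0 < δ := by positivity
  set x' : ℝ × ℝ := (x.1 - δ * a, x.2 - δ * b) with hx'def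
  have hdist : dist x' x < ε := by
    rw [Prod.dist_eq]
    have h1 : dist x'.1 x.1 = δ * |a| := by
      rw [Real.dist_eq]
      simp only [hx'def]
      rw [show x.1 - δ * a - x.1 = -(δ * a) by ring, abs_neg, abs_mul, abs_of_pos hδ]
    have h2 : dist x'.2 x.2 = δ * |b| := by
      rw [Real.dist_eq]
      simp only [hx'def]
      rw [show x.2 - δ * b - x.2 = -(δ * b) by ring, abs_neg, abs_mul, abs_of_pos hδ]
    have hkey : δ * (|a| + |b| + 1) = ε / 2 := by
      rw [hδdef]; field_simp
    have ha' : δ * |a| < ε := by nlinarith [abs_nonneg a, abs_nonneg b]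
    have hb' : δ * |b| < ε := by nlinarith [abs_nonneg a, abs_nonneg b]
    rw [h1, h2]
    exact max_lt ha' hb'
  have hx' : x' ∈ {x : ℝ × ℝ | 0 ≤ a * x.1 + b * x.2} :=
    interior_subset (hball (Metric.mem_ball.mpr hdist))
  have hL : 0 ≤ a * (x.1 - δ * a) + b * (x.2 - δ * b) := hx'
  have h2 : 0 < δ * (a ^ 2 + b ^ 2) := by positivity
  simp only [Set.mem_setOf_eq]
  nlinarith [hL, h2]

lemma interior_cone_subset {u w : ℤ × ℤ} (hd : 0 < detZ u w)
    (hu : (u.1:ℝ) ≠ 0 ∨ (u.2:ℝ) ≠ 0) (hw : (w.1:ℝ) ≠ 0 ∨ (w.2:ℝ) ≠ 0) :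
    ∀ x ∈ interior (coneOf u w),
      0 < (u.1:ℝ) * x.2 - u.2 * x.1 ∧ 0 < x.1 * (w.2:ℝ) - x.2 * w.1 := by
  intro x hx
  have e1 : {y : ℝ × ℝ | 0 ≤ (u.1:ℝ) * y.2 - u.2 * y.1}
      = {y : ℝ × ℝ | 0 ≤ (-(u.2:ℝ)) * y.1 + (u.1:ℝ) * y.2} := by
    ext y; simp only [Set.mem_setOf_eq]; constructor <;> intro h <;> linarith
  have e2 : {y : ℝ × ℝ | 0 ≤ y.1 * (w.2:ℝ) - y.2 * w.1}
      = {y : ℝ × ℝ | 0 ≤ (w.2:ℝ) * y.1 + (-(w.1:ℝ)) * y.2} := by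
    ext y; simp only [Set.mem_setOf_eq]; constructor <;> intro h <;> linarith
  have m1 : x ∈ interior {y : ℝ × ℝ | 0 ≤ (u.1:ℝ) * y.2 - u.2 * y.1} :=
    interior_mono (coneOf_subset₁ hd.le) hx
  have m2 : x ∈ interior {y : ℝ × ℝ | 0 ≤ y.1 * (w.2:ℝ) - y.2 * w.1} :=
    interior_mono (coneOf_subset₂ hd.le) hx
  rw [e1] at m1
  rw [e2] at m2
  have hu' : -(u.2:ℝ) ≠ 0 ∨ (u.1:ℝ) ≠ 0 := by
    rcases hu with h | h
    · exact Or.inr h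
    · exact Or.inl (neg_ne_zero.mpr h)
  have hw' : (w.2:ℝ) ≠ 0 ∨ -(w.1:ℝ) ≠ 0 := by
    rcases hw with h | h
    · exact Or.inr (neg_ne_zero.mpr h)
    · exact Or.inl h
  have s1 := interior_half (-(u.2:ℝ)) (u.1:ℝ) hu' m1
  have s2 := interior_half ((w.2:ℝ)) (-(w.1:ℝ)) hw' m2
  simp only [Set.mem_setOf_eq] at s1 s2
  constructor <;> linarith

lemma K1 (P Q R A B : ℝ) (hp : P ≤ 1) (h1 : R ≤ -P*Q-2) (h4 : R ≤ Q-P*Q-1)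
    (hA : 0 < A) (hB : 0 < B) (h5 : 0 < -A + P*B) : Q*A + R*B < 0 := by
  rcases le_or_gt 0 Q with hQ | hQ
  · nlinarith [mul_le_mul_of_nonneg_right h1 hB.le,
      mul_nonneg hQ (by linarith : (0:ℝ) ≤ P*B - A)]
  · nlinarith [mul_le_mul_of_nonneg_right h4 hB.le,
      mul_nonneg (by linarith : (0:ℝ) ≤ -Q) (by nlinarith : (0:ℝ) ≤ A + (1-P)*B)]

lemma K2 (P Q R A B : ℝ) (h1 : R ≤ -P*Q-2) (h2 : R ≤ -2)
    (hA : 0 < A) (hB : B < 0) (h5 : 0 < -A + P*B) : 0 < Q*A + R*B := by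
  rcases le_or_gt 0 Q with hQ | hQ
  · nlinarith [mul_nonneg hQ hA.le, mul_le_mul_of_nonpos_right h2 hB.le]
  · nlinarith [mul_le_mul_of_nonpos_right h1 hB.le,
      mul_pos_of_neg_of_neg hQ (by linarith : A - P*B < 0)]

lemma K3 (P Q R A B : ℝ) (h2 : R ≤ -2) (h4 : R ≤ Q-P*Q-1)
    (hA : A < 0) (hB : 0 < B) (h5 : -A + P*B < 0) : Q*A + R*B < 0 := by
  rcases le_or_gt 0 Q with hQ | hQ
  · nlinarith [mul_nonneg hQ (le_of_lt (neg_pos.mpr hA)),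
      mul_le_mul_of_nonneg_right h2 hB.le]
  · nlinarith [mul_le_mul_of_nonneg_right h4 hB.le,
      mul_nonneg (by linarith : (0:ℝ) ≤ -Q) (by linarith : (0:ℝ) ≤ A + (1-P)*B)]

lemma E0 (p q r : ℤ) : data4 p q r 0 = (1, 0) := rfl
lemma E1 (p q r : ℤ) : data4 p q r 1 = (0, 1) := rfl
lemma E2 (p q r : ℤ) : data4 p q r 2 = (-1, p) := rfl
lemma E3 (p q r : ℤ) : data4 p q r 3 = (q, r) := rfl

lemma mem_cone0 (x : ℝ × ℝ) (h1 : 0 ≤ x.2) (h2 : 0 ≤ x.1) :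
    x ∈ coneOf (1, 0) (0, 1) := by
  refine mem_coneOf (by norm_num [detZ]) ?_ ?_ <;> push_cast <;> simp <;> linarith

lemma mem_cone1 (p : ℤ) (x : ℝ × ℝ) (h1 : 0 ≤ -x.1) (h2 : 0 ≤ (p:ℝ) * x.1 + x.2) :
    x ∈ coneOf (0, 1) (-1, p) := by
  refine mem_coneOf (by norm_num [detZ]) ?_ ?_ <;> push_cast <;> simp <;> linarith

lemma mem_cone2 (p q r : ℤ) (hd : 0 < -r - p * q) (x : ℝ × ℝ)
    (h1 : 0 ≤ -x.2 - (p:ℝ) * x.1) (h2 : 0 ≤ x.1 * (r:ℝ) - x.2 * (q:ℝ)) :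
    x ∈ coneOf (-1, p) (q, r) := by
  refine mem_coneOf (by simp [detZ]; linarith) ?_ ?_ <;> push_cast <;> simp <;> linarith

lemma mem_cone3 (q r : ℤ) (hd : 0 < -r) (x : ℝ × ℝ)
    (h1 : 0 ≤ (q:ℝ) * x.2 - (r:ℝ) * x.1) (h2 : 0 ≤ -x.2) :
    x ∈ coneOf (q, r) (1, 0) := by
  refine mem_coneOf (by simp [detZ]; linarith) ?_ ?_ <;> push_cast <;> simp <;> linarith

/-- Characterization of the quadrilateral LDP fan data with exactly two singular cones. -/
theorem quadrilateral_two_singular (p q r : ℤ) (hqr : Int.gcd q r = 1) :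
    (IsLDPFanData 4 (data4 p q r) ∧ numSingular 4 (data4 p q r) = 2) ↔
      (p ≤ 1 ∧ r ≤ min (min (-p * q - 2) (-2)) (min (-q - 1) (q - p * q - 1))) := by
  have hall : ∀ i : ZMod 4, i = 0 ∨ i = 1 ∨ i = 2 ∨ i = 3 := by decide
  -- determinant computations
  have hd01 : detZ (data4 p q r 0) (data4 p q r (0+1)) = 1 := by
    rw [show (0:ZMod 4)+1 = 1 by decide, E0, E1]; simp [detZ]
  have hd12 : detZ (data4 p q r 1) (data4 p q r (1+1)) = 1 := by
    rw [show (1:ZMod 4)+1 = 2 by decide, E1, E2]; simp [detZ]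
  have hd23 : detZ (data4 p q r 2) (data4 p q r (2+1)) = -r - p*q := by
    rw [show (2:ZMod 4)+1 = 3 by decide, E2, E3]; simp [detZ]; try ring
  have hd30 : detZ (data4 p q r 3) (data4 p q r (3+1)) = -r := by
    rw [show (3:ZMod 4)+1 = 0 by decide, E3, E0]; simp [detZ]
  -- fanF computations
  have F0 : fanF 4 (data4 p q r) 0 = -r + 1 + -q := by
    simp only [fanF]
    rw [show (0:ZMod 4)-1 = 3 by decide, show (0:ZMod 4)+1 = 1 by decide, E0, E1, E3]
    simp [detZ]; try ring
  have F1 : fanF 4 (data4 p q r) 1 = 2 - p := by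
    simp only [fanF]
    rw [show (1:ZMod 4)-1 = 0 by decide, show (1:ZMod 4)+1 = 2 by decide, E0, E1, E2]
    simp [detZ]; try ring
  have F2 : fanF 4 (data4 p q r) 2 = 1 + (-r - p*q) + q := by
    simp only [fanF]
    rw [show (2:ZMod 4)-1 = 1 by decide, show (2:ZMod 4)+1 = 3 by decide, E1, E2, E3]
    simp [detZ]; try ring
  have F3 : fanF 4 (data4 p q r) 3 = (-r - p*q) + -r + p := by
    simp only [fanF]
    rw [show (3:ZMod 4)-1 = 2 by decide, show (3:ZMod 4)+1 = 0 by decide, E0, E2, E3]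
    simp [detZ]; try ring
  constructor
  · rintro ⟨⟨⟨-, hgcd, hdet, -, -⟩, hf⟩, hns⟩
    simp only [numSingular] at hns
    -- two singular cones
    have hA : 2 ≤ detZ (data4 p q r 2) (data4 p q r (2+1)) := by
      by_contra hc
      have hsub : {i : ZMod 4 | 2 ≤ detZ (data4 p q r i) (data4 p q r (i+1))} ⊆ {3} := by
        intro i hi
        rcases hall i with h | h | h | h <;> subst h
        · rw [Set.mem_setOf_eq, hd01] at hi; omega
        · rw [Set.mem_setOf_eq, hd12] at hi; omega
        · exact absurd hi hc
        · rfl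
      have := Set.ncard_le_ncard hsub (Set.finite_singleton _)
      rw [Set.ncard_singleton] at this
      omega
    have hB : 2 ≤ detZ (data4 p q r 3) (data4 p q r (3+1)) := by
      by_contra hc
      have hsub : {i : ZMod 4 | 2 ≤ detZ (data4 p q r i) (data4 p q r (i+1))} ⊆ {2} := by
        intro i hi
        rcases hall i with h | h | h | h <;> subst h
        · rw [Set.mem_setOf_eq, hd01] at hi; omega
        · rw [Set.mem_setOf_eq, hd12] at hi; omega
        · rfl
        · exact absurd hi hc
      have := Set.ncard_le_ncard hsub (Set.finite_singleton _)
      rw [Set.ncard_singleton] at this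
      omega
    rw [hd23] at hA
    rw [hd30] at hB
    have hr1 : r ≤ -p*q - 2 := by linarith
    have hr2 : r ≤ -2 := by linarith
    have hp1 : p ≤ 1 := by have := hf 1; rw [F1] at this; linarith
    have hr3 : r ≤ -q - 1 := by
      have h0 := hf 0; rw [F0] at h0
      by_contra hc
      have hqq : r = -q := by omega
      have : Int.gcd q (-q) = 1 := hqq ▸ hqr
      have hna : q.natAbs = 1 := by
        simpa [Int.gcd, Int.natAbs_neg] using this
      omega
    have hr4 : r ≤ q - p*q - 1 := by
      have h2 := hf 2; rw [F2] at h2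
      by_contra hc
      have hqq : r = q - p*q := le_antisymm (by linarith) (by linarith)
      have hdvd : q ∣ (q - p*q) := ⟨1 - p, by ring⟩
      have : Int.gcd q (q - p*q) = 1 := hqq ▸ hqr
      have hna : q.natAbs = 1 := by rwa [Int.gcd_eq_natAbs_left hdvd] at this
      have hq1 : q = 1 ∨ q = -1 := by omega
      rcases hq1 with h | h <;> subst h <;> omega
    exact ⟨hp1, le_min (le_min hr1 hr2) (le_min hr3 hr4)⟩
  · rintro ⟨hp1, hr⟩
    rw [le_min_iff, le_min_iff, le_min_iff] at hr
    obtain ⟨⟨hr1, hr2⟩, hr3, hr4⟩ := hr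
    -- real versions
    have hpR : (p:ℝ) ≤ 1 := by exact_mod_cast hp1
    have h1R : (r:ℝ) ≤ -(p:ℝ)*(q:ℝ) - 2 := by exact_mod_cast hr1
    have h2R : (r:ℝ) ≤ -2 := by exact_mod_cast hr2
    have h3R : (r:ℝ) ≤ -(q:ℝ) - 1 := by exact_mod_cast hr3
    have h4R : (r:ℝ) ≤ (q:ℝ) - (p:ℝ)*(q:ℝ) - 1 := by exact_mod_cast hr4
    have hd23' : (0:ℤ) < -r - p*q := by linarith
    have hd30' : (0:ℤ) < -r := by linarith
    -- det ≥ 1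
    have hdet : ∀ i : ZMod 4, 1 ≤ detZ (data4 p q r i) (data4 p q r (i+1)) := by
      intro i
      rcases hall i with h | h | h | h <;> subst h
      · rw [hd01]
      · rw [hd12]
      · rw [hd23]; linarith
      · rw [hd30]; linarith
    -- gcd
    have hgcd : ∀ i : ZMod 4, Int.gcd (data4 p q r i).1 (data4 p q r i).2 = 1 := by
      intro i
      rcases hall i with h | h | h | h <;> subst h
      · rw [E0]; rfl
      · rw [E1]; rfl
      · rw [E2]; simp [Int.gcd]
      · rw [E3]; exact hqr
    -- covering
    have hcov : (⋃ i, coneOf (data4 p q r i) (data4 p q r (i + 1))) = Set.univ := by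
      rw [Set.eq_univ_iff_forall]
      intro x
      rw [Set.mem_iUnion]
      by_cases c0 : 0 < x.2
      · by_cases c1 : 0 < -x.1
        · by_cases c2 : 0 < -x.2 - (p:ℝ) * x.1
          · by_cases c3 : 0 < (q:ℝ) * x.2 - (r:ℝ) * x.1
            · exfalso
              have := K1 (p:ℝ) (q:ℝ) (r:ℝ) x.2 (-x.1) hpR h1R h4R c0 c1
                (by ring_nf; ring_nf at c2; linarith)
              ring_nf at this; ring_nf at c3; linarith
            · refine ⟨2, ?_⟩
              rw [show (2:ZMod 4)+1 = 3 by decide, E2, E3]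
              exact mem_cone2 p q r hd23' x (by linarith) (by push_neg at c3; linarith)
          · refine ⟨1, ?_⟩
            rw [show (1:ZMod 4)+1 = 2 by decide, E1, E2]
            exact mem_cone1 p x c1.le (by push_neg at c2; linarith)
        · refine ⟨0, ?_⟩
          rw [show (0:ZMod 4)+1 = 1 by decide, E0, E1]
          exact mem_cone0 x c0.le (by push_neg at c1; linarith)
      · push_neg at c0
        by_cases c1 : 0 < -x.1
        · by_cases c2 : 0 < -x.2 - (p:ℝ) * x.1
          · by_cases c3 : 0 < (q:ℝ) * x.2 - (r:ℝ) * x.1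
            · refine ⟨3, ?_⟩
              rw [show (3:ZMod 4)+1 = 0 by decide, E3, E0]
              exact mem_cone3 q r hd30' x c3.le (by linarith)
            · refine ⟨2, ?_⟩
              rw [show (2:ZMod 4)+1 = 3 by decide, E2, E3]
              exact mem_cone2 p q r hd23' x (by linarith) (by push_neg at c3; linarith)
          · refine ⟨1, ?_⟩
            rw [show (1:ZMod 4)+1 = 2 by decide, E1, E2]
            exact mem_cone1 p x c1.le (by push_neg at c2; linarith)
        · push_neg at c1
          by_cases c2 : 0 < -x.2 - (p:ℝ) * x.1
          · by_cases c3 : 0 < (q:ℝ) * x.2 - (r:ℝ) * x.1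
            · refine ⟨3, ?_⟩
              rw [show (3:ZMod 4)+1 = 0 by decide, E3, E0]
              exact mem_cone3 q r hd30' x c3.le (by linarith)
            · refine ⟨2, ?_⟩
              rw [show (2:ZMod 4)+1 = 3 by decide, E2, E3]
              exact mem_cone2 p q r hd23' x (by linarith) (by push_neg at c3; linarith)
          · push_neg at c2
            by_cases c3 : 0 < (q:ℝ) * x.2 - (r:ℝ) * x.1
            · refine ⟨3, ?_⟩
              rw [show (3:ZMod 4)+1 = 0 by decide, E3, E0]
              exact mem_cone3 q r hd30' x c3.le (by linarith)
            · push_neg at c3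
              -- all ≤ 0
              rcases eq_or_lt_of_le c0 with h0 | h0
              · refine ⟨0, ?_⟩
                rw [show (0:ZMod 4)+1 = 1 by decide, E0, E1]
                exact mem_cone0 x (le_of_eq h0.symm) (by linarith)
              · rcases eq_or_lt_of_le c1 with h1 | h1
                · refine ⟨1, ?_⟩
                  rw [show (1:ZMod 4)+1 = 2 by decide, E1, E2]
                  exact mem_cone1 p x (le_of_eq h1.symm) (by linarith)
                · rcases eq_or_lt_of_le c2 with h2 | h2
                  · refine ⟨2, ?_⟩
                    rw [show (2:ZMod 4)+1 = 3 by decide, E2, E3]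
                    exact mem_cone2 p q r hd23' x (le_of_eq h2.symm) (by linarith)
                  · rcases eq_or_lt_of_le c3 with h3 | h3
                    · refine ⟨3, ?_⟩
                      rw [show (3:ZMod 4)+1 = 0 by decide, E3, E0]
                      exact mem_cone3 q r hd30' x (le_of_eq h3.symm) (by linarith)
                    · exfalso
                      have := K1 (p:ℝ) (q:ℝ) (r:ℝ) (-x.2) (x.1) hpR h1R h4R
                        (by linarith) (by linarith) (by ring_nf; ring_nf at h2; linarith)
                      ring_nf at this; ring_nf at h3; linarith
    -- disjoint interiors
    have hne0 : ((1:ℤ):ℝ) ≠ 0 ∨ ((0:ℤ):ℝ) ≠ 0 := Or.inl (by norm_num)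
    have hne1 : ((0:ℤ):ℝ) ≠ 0 ∨ ((1:ℤ):ℝ) ≠ 0 := Or.inr (by norm_num)
    have hne2 : ((-1:ℤ):ℝ) ≠ 0 ∨ ((p:ℤ):ℝ) ≠ 0 := Or.inl (by norm_num)
    have hne3 : ((q:ℤ):ℝ) ≠ 0 ∨ ((r:ℤ):ℝ) ≠ 0 := by
      right
      have : (r:ℝ) ≤ -2 := h2R
      intro h; rw [h] at this; linarith
    have S0 : ∀ x ∈ interior (coneOf ((1,0):ℤ×ℤ) ((0,1):ℤ×ℤ)), 0 < x.2 ∧ 0 < x.1 := by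
      intro x hx
      have := interior_cone_subset (u := (1,0)) (w := (0,1)) (by norm_num [detZ]) hne0 hne1 x hx
      push_cast at this
      constructor <;> [linarith [this.1]; linarith [this.2]]
    have S1 : ∀ x ∈ interior (coneOf ((0,1):ℤ×ℤ) ((-1,p):ℤ×ℤ)),
        x.1 < 0 ∧ 0 < (p:ℝ) * x.1 + x.2 := by
      intro x hx
      have := interior_cone_subset (u := (0,1)) (w := (-1,p)) (by norm_num [detZ]) hne1 hne2 x hx
      push_cast at this
      constructor <;> [linarith [this.1]; linarith [this.2]]
    have S2 : ∀ x ∈ interior (coneOf ((-1,p):ℤ×ℤ) ((q,r):ℤ×ℤ)),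
        0 < -x.2 - (p:ℝ) * x.1 ∧ 0 < x.1 * (r:ℝ) - x.2 * (q:ℝ) := by
      intro x hx
      have := interior_cone_subset (u := (-1,p)) (w := (q,r))
        (by simp [detZ]; linarith) hne2 hne3 x hx
      push_cast at this
      constructor <;> [linarith [this.1]; linarith [this.2]]
    have S3 : ∀ x ∈ interior (coneOf ((q,r):ℤ×ℤ) ((1,0):ℤ×ℤ)),
        0 < (q:ℝ) * x.2 - (r:ℝ) * x.1 ∧ x.2 < 0 := by
      intro x hx
      have := interior_cone_subset (u := (q,r)) (w := (1,0))
        (by simp [detZ]; linarith) hne3 hne0 x hx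
      push_cast at this
      constructor <;> [linarith [this.1]; linarith [this.2]]
    -- pairwise contradictions
    have C02 : ∀ x : ℝ × ℝ, x ∈ interior (coneOf ((1,0):ℤ×ℤ) ((0,1):ℤ×ℤ)) →
        x ∈ interior (coneOf ((-1,p):ℤ×ℤ) ((q,r):ℤ×ℤ)) → False := by
      intro x h0 h2
      obtain ⟨a0, a1⟩ := S0 x h0
      obtain ⟨b0, b1⟩ := S2 x h2
      have := K2 (p:ℝ) (q:ℝ) (r:ℝ) x.2 (-x.1) h1R h2R a0 (by linarith)
        (by ring_nf; ring_nf at b0; linarith)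
      ring_nf at this; ring_nf at b1; linarith
    have C13 : ∀ x : ℝ × ℝ, x ∈ interior (coneOf ((0,1):ℤ×ℤ) ((-1,p):ℤ×ℤ)) →
        x ∈ interior (coneOf ((q,r):ℤ×ℤ) ((1,0):ℤ×ℤ)) → False := by
      intro x h1 h3
      obtain ⟨a0, a1⟩ := S1 x h1
      obtain ⟨b0, b1⟩ := S3 x h3
      have := K3 (p:ℝ) (q:ℝ) (r:ℝ) x.2 (-x.1) h2R h4R b1 (by linarith)
        (by ring_nf; ring_nf at a1; linarith)
      ring_nf at this; ring_nf at b0; linarith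
    have C01 : ∀ x : ℝ × ℝ, x ∈ interior (coneOf ((1,0):ℤ×ℤ) ((0,1):ℤ×ℤ)) →
        x ∈ interior (coneOf ((0,1):ℤ×ℤ) ((-1,p):ℤ×ℤ)) → False := by
      intro x h0 h1
      obtain ⟨a0, a1⟩ := S0 x h0
      obtain ⟨b0, b1⟩ := S1 x h1
      linarith
    have C03 : ∀ x : ℝ × ℝ, x ∈ interior (coneOf ((1,0):ℤ×ℤ) ((0,1):ℤ×ℤ)) →
        x ∈ interior (coneOf ((q,r):ℤ×ℤ) ((1,0):ℤ×ℤ)) → False := by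
      intro x h0 h3
      obtain ⟨a0, a1⟩ := S0 x h0
      obtain ⟨b0, b1⟩ := S3 x h3
      linarith
    have C12 : ∀ x : ℝ × ℝ, x ∈ interior (coneOf ((0,1):ℤ×ℤ) ((-1,p):ℤ×ℤ)) →
        x ∈ interior (coneOf ((-1,p):ℤ×ℤ) ((q,r):ℤ×ℤ)) → False := by
      intro x h1 h2
      obtain ⟨a0, a1⟩ := S1 x h1
      obtain ⟨b0, b1⟩ := S2 x h2
      linarith
    have C23 : ∀ x : ℝ × ℝ, x ∈ interior (coneOf ((-1,p):ℤ×ℤ) ((q,r):ℤ×ℤ)) →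
        x ∈ interior (coneOf ((q,r):ℤ×ℤ) ((1,0):ℤ×ℤ)) → False := by
      intro x h2 h3
      obtain ⟨a0, a1⟩ := S2 x h2
      obtain ⟨b0, b1⟩ := S3 x h3
      linarith
    have I0 : (0:ZMod 4) + 1 = 1 := by decide
    have I1 : (1:ZMod 4) + 1 = 2 := by decide
    have I2 : (2:ZMod 4) + 1 = 3 := by decide
    have I3 : (3:ZMod 4) + 1 = 0 := by decide
    have hdisj : ∀ i j : ZMod 4, i ≠ j →
        interior (coneOf (data4 p q r i) (data4 p q r (i + 1))) ∩
          interior (coneOf (data4 p q r j) (data4 p q r (j + 1))) = ∅ := by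
      intro i j hij
      rw [Set.eq_empty_iff_forall_notMem]
      rintro x ⟨hxi, hxj⟩
      rcases hall i with hi | hi | hi | hi <;> rcases hall j with hj | hj | hj | hj <;>
          subst hi <;> subst hj <;>
          simp only [I0, I1, I2, I3, E0, E1, E2, E3] at hxi hxj <;>
        first
          | exact hij rfl
          | exact C01 x hxi hxj
          | exact C01 x hxj hxi
          | exact C02 x hxi hxj
          | exact C02 x hxj hxi
          | exact C03 x hxi hxj
          | exact C03 x hxj hxi
          | exact C12 x hxi hxj
          | exact C12 x hxj hxi
          | exact C13 x hxi hxj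
          | exact C13 x hxj hxi
          | exact C23 x hxi hxj
          | exact C23 x hxj hxi
    -- fanF
    have hfan : ∀ i : ZMod 4, 1 ≤ fanF 4 (data4 p q r) i := by
      intro i
      rcases hall i with h | h | h | h <;> subst h
      · rw [F0]; linarith
      · rw [F1]; linarith
      · rw [F2]; linarith
      · rw [F3]
        -- 1 ≤ -r - p*q + -r + p , i.e. 2r ≤ p - p*q - 1
        rcases lt_trichotomy q 0 with hq | hq | hq
        · nlinarith [mul_le_mul_of_nonpos_right hp1 (by linarith : q + 1 - 1 ≤ 0)]
        · subst hq
          have : r.natAbs = 1 := by simpa [Int.gcd] using hqr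
          omega
        · nlinarith [mul_le_mul_of_nonpos_right hp1 (by linarith : 1 - q ≤ 0)]
    -- numSingular
    have hnum : numSingular 4 (data4 p q r) = 2 := by
      simp only [numSingular]
      have : {i : ZMod 4 | 2 ≤ detZ (data4 p q r i) (data4 p q r (i+1))} = {2, 3} := by
        ext i
        simp only [Set.mem_setOf_eq, Set.mem_insert_iff, Set.mem_singleton_iff]
        rcases hall i with h | h | h | h <;> subst h
        · rw [hd01]; constructor
          · intro h; omega
          · intro h; rcases h with h | h <;> exact absurd h (by decide)
        · rw [hd12]; constructor
          · intro h; omega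
          · intro h; rcases h with h | h <;> exact absurd h (by decide)
        · rw [hd23]; constructor
          · intro _; left; rfl
          · intro _; linarith
        · rw [hd30]; constructor
          · intro _; right; rfl
          · intro _; linarith
      rw [this]
      exact Set.ncard_pair (by decide)
    exact ⟨⟨⟨by norm_num, hgcd, hdet, hcov, hdisj⟩, hfan⟩, hnum⟩
end

section
/- Let v_1, v_2, v_3 be complete fan data of length 3 with exactly two singular cones. Then the data is automatically LDP fan data, and there exist integers p, q with p, q ≥ 2 and gcd(p, q) = 1 such that the data is equivalent to the data (1,0), (0,1), (−p,−q). Conversely, for any integers p, q ≥ 2 with gcd(p, q) = 1, the cyclic sequence (1,0), (0,1), (−p,−q) is complete LDP fan data of length 3 with exactly two singular cones. -/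
/-- The data `(1,0), (0,1), (−p,−q)`. -/
def data3 (p q : ℤ) : ZMod 3 → ℤ × ℤ := fun i =>
  if i = 0 then (1, 0) else if i = 1 then (0, 1) else (-p, -q)



section TriangleHelpers

lemma zmod3_cases : ∀ i : ZMod 3, i = 0 ∨ i = 1 ∨ i = 2 := by decide

lemma interior_subset_open_halfplane {α β : ℝ} (hne : α ≠ 0 ∨ β ≠ 0)
    {S : Set (ℝ × ℝ)} (hS : S ⊆ {z | 0 ≤ α * z.1 + β * z.2}) :
    interior S ⊆ {z | 0 < α * z.1 + β * z.2} := by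
  intro z hz
  rw [mem_interior_iff_mem_nhds, Metric.mem_nhds_iff] at hz
  obtain ⟨ε, hε, hball⟩ := hz
  have hc : 0 < max |α| |β| := by
    rcases hne with h | h
    · exact lt_max_of_lt_left (abs_pos.mpr h)
    · exact lt_max_of_lt_right (abs_pos.mpr h)
  set c := max |α| |β| with hcdef
  set t := ε / (2 * c) with ht
  have htpos : 0 < t := div_pos hε (by positivity)
  have hz' : (z.1 - t * α, z.2 - t * β) ∈ S := by
    apply hball
    rw [Metric.mem_ball, Prod.dist_eq]
    have h1 : dist (z.1 - t * α) z.1 = t * |α| := by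
      have e : z.1 - t * α - z.1 = -(t * α) := by ring
      rw [Real.dist_eq, e, abs_neg, abs_mul, abs_of_pos htpos]
    have h2 : dist (z.2 - t * β) z.2 = t * |β| := by
      have e : z.2 - t * β - z.2 = -(t * β) := by ring
      rw [Real.dist_eq, e, abs_neg, abs_mul, abs_of_pos htpos]
    rw [h1, h2]
    have hca : t * |α| ≤ t * c := by
      apply mul_le_mul_of_nonneg_left (le_max_left _ _) htpos.le
    have hcb : t * |β| ≤ t * c := by
      apply mul_le_mul_of_nonneg_left (le_max_right _ _) htpos.le
    have htc : t * c = ε / 2 := by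
      rw [ht]; field_simp
    have : t * c < ε := by rw [htc]; linarith
    exact max_lt (lt_of_le_of_lt hca this) (lt_of_le_of_lt hcb this)
  have key : 0 ≤ α * (z.1 - t * α) + β * (z.2 - t * β) := hS hz'
  have hn : 0 < α ^ 2 + β ^ 2 := by
    rcases hne with h | h
    · have := pow_pos (abs_pos.mpr h) 2
      rw [sq_abs] at this; nlinarith [sq_nonneg β]
    · have := pow_pos (abs_pos.mpr h) 2
      rw [sq_abs] at this; nlinarith [sq_nonneg α]
  have := mul_pos htpos hn
  show 0 < α * z.1 + β * z.2
  nlinarith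

lemma interior_disjoint {α β : ℝ} (hne : α ≠ 0 ∨ β ≠ 0) {A B : Set (ℝ × ℝ)}
    (hA : A ⊆ {z | 0 ≤ α * z.1 + β * z.2})
    (hB : B ⊆ {z | 0 ≤ (-α) * z.1 + (-β) * z.2}) :
    interior A ∩ interior B = ∅ := by
  rw [Set.eq_empty_iff_forall_notMem]
  rintro z ⟨hzA, hzB⟩
  have h1 := interior_subset_open_halfplane hne hA hzA
  have h2 := interior_subset_open_halfplane (hne.imp neg_ne_zero.mpr neg_ne_zero.mpr) hB hzB
  simp only [Set.mem_setOf_eq] at h1 h2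
  linarith

lemma cone_subset {u w : ℤ × ℤ} {α β : ℝ}
    (hu : 0 ≤ α * u.1 + β * u.2) (hw : 0 ≤ α * w.1 + β * w.2) :
    coneOf u w ⊆ {z | 0 ≤ α * z.1 + β * z.2} := by
  rintro z ⟨a, b, ha, hb, rfl⟩
  simp only [Set.mem_setOf_eq, toR2, Prod.smul_mk, smul_eq_mul, Prod.mk_add_mk]
  nlinarith [mul_nonneg ha hu, mul_nonneg hb hw]

lemma mem_cone0_s3 {z : ℝ × ℝ} (hx : 0 ≤ z.1) (hy : 0 ≤ z.2) :
    z ∈ coneOf (1, 0) (0, 1) := by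
  refine ⟨z.1, z.2, hx, hy, ?_⟩
  simp [toR2, Prod.ext_iff]

lemma mem_cone1_s3 {p q : ℤ} (hp : 2 ≤ p) (hq : 2 ≤ q) {z : ℝ × ℝ}
    (h1 : z.1 ≤ 0) (h2 : (q : ℝ) * z.1 ≤ p * z.2) :
    z ∈ coneOf (0, 1) (-p, -q) := by
  have hp0 : (0:ℝ) < p := by
    have : (2:ℝ) ≤ (p:ℝ) := by exact_mod_cast hp
    linarith
  refine ⟨z.2 - (q / p) * z.1, -z.1 / p, ?_, ?_, ?_⟩
  · rw [sub_nonneg, div_mul_eq_mul_div, div_le_iff₀ hp0]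
    linarith [h2]
  · exact div_nonneg (neg_nonneg.mpr h1) hp0.le
  · simp only [toR2, Prod.smul_mk, smul_eq_mul, Prod.mk_add_mk, Prod.ext_iff]
    push_cast
    constructor
    · field_simp; ring
    · field_simp; ring

lemma mem_cone2_s3 {p q : ℤ} (hp : 2 ≤ p) (hq : 2 ≤ q) {z : ℝ × ℝ}
    (h1 : (p : ℝ) * z.2 ≤ q * z.1) (h2 : z.2 ≤ 0) :
    z ∈ coneOf (-p, -q) (1, 0) := by
  have hq0 : (0:ℝ) < q := by
    have : (2:ℝ) ≤ (q:ℝ) := by exact_mod_cast hq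
    linarith
  refine ⟨-z.2 / q, z.1 - (p / q) * z.2, ?_, ?_, ?_⟩
  · exact div_nonneg (neg_nonneg.mpr h2) hq0.le
  · rw [sub_nonneg, div_mul_eq_mul_div, div_le_iff₀ hq0]
    linarith [h1]
  · simp only [toR2, Prod.smul_mk, smul_eq_mul, Prod.mk_add_mk, Prod.ext_iff]
    push_cast
    constructor
    · field_simp; ring
    · field_simp; ring

lemma cover_data3 {p q : ℤ} (hp : 2 ≤ p) (hq : 2 ≤ q) (z : ℝ × ℝ) :
    z ∈ coneOf (1,0) (0,1) ∨ z ∈ coneOf (0,1) (-p,-q) ∨ z ∈ coneOf (-p,-q) (1,0) := by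
  have hp0 : (0:ℝ) < p := by
    have : (2:ℝ) ≤ (p:ℝ) := by exact_mod_cast hp
    linarith
  have hq0 : (0:ℝ) < q := by
    have : (2:ℝ) ≤ (q:ℝ) := by exact_mod_cast hq
    linarith
  by_cases hx : 0 ≤ z.1
  · by_cases hy : 0 ≤ z.2
    · exact Or.inl (mem_cone0_s3 hx hy)
    · push_neg at hy
      refine Or.inr (Or.inr (mem_cone2_s3 hp hq ?_ hy.le))
      nlinarith
  · push_neg at hx
    by_cases h : (q : ℝ) * z.1 ≤ p * z.2
    · exact Or.inr (Or.inl (mem_cone1_s3 hp hq hx.le h))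
    · push_neg at h
      have hy : z.2 ≤ 0 := by nlinarith
      exact Or.inr (Or.inr (mem_cone2_s3 hp hq h.le hy))

lemma zmod3_sub1 : ∀ i : ZMod 3, i - 1 = i + 2 := by decide
lemma zmod3_a1 : ∀ i : ZMod 3, i + 1 + 1 = i + 2 := by decide
lemma zmod3_a2 : ∀ i : ZMod 3, i + 2 + 1 = i := by decide
lemma zmod3_ne1 : ∀ i : ZMod 3, i + 1 ≠ i := by decide
lemma zmod3_ne2 : ∀ i : ZMod 3, i + 2 ≠ i := by decide
lemma zmod3_all : ∀ i k : ZMod 3, i = k ∨ i = k + 1 ∨ i = k + 2 := by decide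

lemma fanF_three (v : ZMod 3 → ℤ × ℤ) (hdet : ∀ i, 1 ≤ detZ (v i) (v (i + 1)))
    (i : ZMod 3) : 1 ≤ fanF 3 v i := by
  have h1 := hdet i
  have h2 := hdet (i + 1)
  have h3 := hdet (i + 2)
  rw [zmod3_a1] at h2
  rw [zmod3_a2] at h3
  rw [fanF, zmod3_sub1]
  linarith

lemma exists_nonsingular (v : ZMod 3 → ℤ × ℤ) (hdet : ∀ i, 1 ≤ detZ (v i) (v (i + 1)))
    (hns : numSingular 3 v = 2) :
    ∃ k, detZ (v k) (v (k + 1)) = 1 ∧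
      2 ≤ detZ (v (k + 1)) (v (k + 2)) ∧ 2 ≤ detZ (v (k + 2)) (v k) := by
  classical
  set F : Finset (ZMod 3) := Finset.univ.filter (fun i => 2 ≤ detZ (v i) (v (i + 1))) with hF
  have hSF : {i : ZMod 3 | 2 ≤ detZ (v i) (v (i + 1))} = ↑F := by
    ext i; simp [hF]
  have hcard : F.card = 2 := by
    rw [numSingular, hSF, Set.ncard_coe_finset] at hns; exact hns
  have hne : F ≠ Finset.univ := by
    intro h
    rw [h, Finset.card_univ] at hcard
    simp at hcard
  obtain ⟨k, hk⟩ : ∃ k, k ∉ F := by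
    by_contra h
    push_neg at h
    exact hne (Finset.eq_univ_iff_forall.mpr h)
  have hsub : F ⊆ Finset.univ.erase k := fun x hx =>
    Finset.mem_erase.mpr ⟨fun hxk => hk (hxk ▸ hx), Finset.mem_univ x⟩
  have hcard2 : (Finset.univ.erase k).card = 2 := by
    rw [Finset.card_erase_of_mem (Finset.mem_univ k), Finset.card_univ]
    rfl
  have hFeq : F = Finset.univ.erase k :=
    Finset.eq_of_subset_of_card_le hsub (by omega)
  have hm1 : k + 1 ∈ F := by
    rw [hFeq]; exact Finset.mem_erase.mpr ⟨zmod3_ne1 k, Finset.mem_univ _⟩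
  have hm2 : k + 2 ∈ F := by
    rw [hFeq]; exact Finset.mem_erase.mpr ⟨zmod3_ne2 k, Finset.mem_univ _⟩
  rw [hF, Finset.mem_filter] at hm1 hm2
  rw [hF, Finset.mem_filter] at hk
  push_neg at hk
  have h1 := hk (Finset.mem_univ k)
  have h0 := hdet k
  have h2 := hm1.2
  have h3 := hm2.2
  rw [zmod3_a1] at h2
  rw [zmod3_a2] at h3
  exact ⟨k, by omega, h2, h3⟩

lemma forward (v : ZMod 3 → ℤ × ℤ) (hprim : ∀ i, Int.gcd (v i).1 (v i).2 = 1)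
    (hdet : ∀ i, 1 ≤ detZ (v i) (v (i + 1))) (hns : numSingular 3 v = 2) :
    ∃ p q : ℤ, 2 ≤ p ∧ 2 ≤ q ∧ Int.gcd p q = 1 ∧ FanEquiv v (data3 p q) := by
  obtain ⟨k, h1, h2, h3⟩ := exists_nonsingular v hdet hns
  set u := v k with hu
  set w := v (k + 1) with hw
  set t := v (k + 2) with ht
  rw [detZ] at h1 h2 h3
  refine ⟨w.1 * t.2 - w.2 * t.1, t.1 * u.2 - t.2 * u.1, h2, h3, ?_, ?_⟩
  · -- gcd = 1
    have hco : IsCoprime t.1 t.2 := Int.isCoprime_iff_gcd_eq_one.mpr (hprim (k + 2))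
    obtain ⟨a, b, hab⟩ := hco
    have key2 : IsCoprime (-(w.1 * t.2 - w.2 * t.1)) (-(t.1 * u.2 - t.2 * u.1)) := by
      refine ⟨a * u.1 + b * u.2, a * w.1 + b * w.2, ?_⟩
      linear_combination (a * t.1 + b * t.2) * h1 + hab
    have key : IsCoprime (w.1 * t.2 - w.2 * t.1) (t.1 * u.2 - t.2 * u.1) :=
      (IsCoprime.neg_neg_iff _ _).mp key2
    exact Int.isCoprime_iff_gcd_eq_one.mp key
  · -- FanEquiv
    set p := w.1 * t.2 - w.2 * t.1 with hp
    set q := t.1 * u.2 - t.2 * u.1 with hq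
    refine ⟨!![w.2, -w.1; -u.2, u.1], ?_, ?_⟩
    · rw [Matrix.det_fin_two_of]
      have : w.2 * u.1 - -w.1 * -u.2 = 1 := by linear_combination h1
      rw [this]; exact isUnit_one
    · have hrv : Set.range v = {u, w, t} := by
        apply subset_antisymm
        · rintro z ⟨i, rfl⟩
          rcases zmod3_all i k with rfl | rfl | rfl
          · exact Set.mem_insert _ _
          · exact Set.mem_insert_of_mem _ (Set.mem_insert _ _)
          · exact Set.mem_insert_of_mem _ (Set.mem_insert_of_mem _ rfl)
        · rintro z (rfl | rfl | rfl)
          · exact ⟨k, rfl⟩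
          · exact ⟨k + 1, rfl⟩
          · exact ⟨k + 2, rfl⟩
      have hrd : Set.range (data3 p q) = {((1:ℤ),(0:ℤ)), (0,1), (-p,-q)} := by
        apply subset_antisymm
        · rintro z ⟨i, rfl⟩
          rcases zmod3_cases i with rfl | rfl | rfl
          · exact Set.mem_insert _ _
          · exact Set.mem_insert_of_mem _ (Set.mem_insert _ _)
          · exact Set.mem_insert_of_mem _ (Set.mem_insert_of_mem _ rfl)
        · rintro z (rfl | rfl | rfl)
          · exact ⟨0, rfl⟩
          · exact ⟨1, rfl⟩
          · exact ⟨2, rfl⟩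
      rw [hrv, hrd]
      have hM : ∀ i j : Fin 2, True := fun _ _ => trivial
      rw [Set.image_insert_eq, Set.image_insert_eq, Set.image_singleton]
      simp only [Matrix.cons_val', Matrix.cons_val_zero, Matrix.cons_val_one,
        Matrix.head_cons, Matrix.head_fin_const, Matrix.empty_val',
        Matrix.cons_val_fin_one, Matrix.of_apply]
      congr 1
      · exact Prod.ext (by linear_combination h1) (by ring)
      congr 1
      · exact Prod.ext (by ring) (by linear_combination h1)
      · exact congrArg _ (Prod.ext (by rw [hp]; ring) (by rw [hq]; ring))

lemma data3_complete {p q : ℤ} (hp : 2 ≤ p) (hq : 2 ≤ q) (hgcd : Int.gcd p q = 1) :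
    IsCompleteFanData 3 (data3 p q) := by
  have hp' : (2:ℝ) ≤ (p:ℝ) := by exact_mod_cast hp
  have hq' : (2:ℝ) ≤ (q:ℝ) := by exact_mod_cast hq
  have e01 : (0:ZMod 3) + 1 = 1 := by decide
  have e12 : (1:ZMod 3) + 1 = 2 := by decide
  have e20 : (2:ZMod 3) + 1 = 0 := by decide
  refine ⟨le_refl 3, ?_, ?_, ?_, ?_⟩
  · intro i
    rcases zmod3_cases i with rfl | rfl | rfl
    · show Int.gcd (1:ℤ) 0 = 1; decide
    · show Int.gcd (0:ℤ) 1 = 1; decide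
    · show Int.gcd (-p) (-q) = 1
      rw [Int.neg_gcd, Int.gcd_neg]; exact hgcd
  · intro i
    rcases zmod3_cases i with rfl | rfl | rfl
    · rw [e01]; show 1 ≤ detZ (1,0) (0,1); simp [detZ]
    · rw [e12]; show 1 ≤ detZ (0,1) (-p,-q); simp [detZ]; omega
    · rw [e20]; show 1 ≤ detZ (-p,-q) (1,0); simp [detZ]; omega
  · rw [Set.eq_univ_iff_forall]
    intro z
    rcases cover_data3 hp hq z with h | h | h
    · exact Set.mem_iUnion.mpr ⟨0, by rw [e01]; exact h⟩
    · exact Set.mem_iUnion.mpr ⟨1, by rw [e12]; exact h⟩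
    · exact Set.mem_iUnion.mpr ⟨2, by rw [e20]; exact h⟩
  · intro i j hij
    have c0 : coneOf ((1:ℤ),(0:ℤ)) (0,1) ⊆ {z : ℝ × ℝ | 0 ≤ 1 * z.1 + 0 * z.2} :=
      cone_subset (by norm_num) (by norm_num)
    have c0' : coneOf ((1:ℤ),(0:ℤ)) (0,1) ⊆ {z : ℝ × ℝ | 0 ≤ 0 * z.1 + 1 * z.2} :=
      cone_subset (by norm_num) (by norm_num)
    have c1 : coneOf ((0:ℤ),(1:ℤ)) (-p,-q) ⊆ {z : ℝ × ℝ | 0 ≤ (-1) * z.1 + (-0) * z.2} :=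
      cone_subset (by norm_num) (by push_cast; norm_num; linarith)
    have c1' : coneOf ((0:ℤ),(1:ℤ)) (-p,-q) ⊆ {z : ℝ × ℝ | 0 ≤ (-q) * z.1 + (p:ℝ) * z.2} :=
      cone_subset (by push_cast; norm_num; linarith) (by push_cast; ring_nf; norm_num)
    have c2 : coneOf ((-p),(-q)) (1,0) ⊆ {z : ℝ × ℝ | 0 ≤ (-0) * z.1 + (-1) * z.2} :=
      cone_subset (by push_cast; norm_num; linarith) (by norm_num)
    have c2' : coneOf ((-p),(-q)) (1,0) ⊆ {z : ℝ × ℝ | 0 ≤ (-(-q)) * z.1 + (-(p:ℝ)) * z.2} :=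
      cone_subset (by push_cast; ring_nf; norm_num) (by push_cast; norm_num; linarith)
    have hq1 : (-q : ℝ) ≠ 0 ∨ (p:ℝ) ≠ 0 := Or.inr (by linarith)
    rcases zmod3_cases i with rfl | rfl | rfl <;> rcases zmod3_cases j with rfl | rfl | rfl <;>
        first
      | exact absurd rfl hij
      | (rw [e01, e12]; exact interior_disjoint (Or.inl one_ne_zero) c0 c1)
      | (rw [e01, e20]; exact interior_disjoint (Or.inr one_ne_zero) c0' c2)
      | (rw [e12, e01]; rw [Set.inter_comm]; exact interior_disjoint (Or.inl one_ne_zero) c0 c1)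
      | (rw [e12, e20]; exact interior_disjoint hq1 c1' c2')
      | (rw [e20, e01]; rw [Set.inter_comm]; exact interior_disjoint (Or.inr one_ne_zero) c0' c2)
      | (rw [e20, e12]; rw [Set.inter_comm]; exact interior_disjoint hq1 c1' c2')

lemma data3_numSingular {p q : ℤ} (hp : 2 ≤ p) (hq : 2 ≤ q) :
    numSingular 3 (data3 p q) = 2 := by
  have e01 : (0:ZMod 3) + 1 = 1 := by decide
  have e12 : (1:ZMod 3) + 1 = 2 := by decide
  have e20 : (2:ZMod 3) + 1 = 0 := by decide
  have hset : {i : ZMod 3 | 2 ≤ detZ (data3 p q i) (data3 p q (i + 1))} = {1, 2} := by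
    ext i
    rcases zmod3_cases i with rfl | rfl | rfl
    · rw [Set.mem_setOf_eq, e01]
      show (2 ≤ detZ (1,0) (0,1)) ↔ _
      simp [detZ]
      decide
    · rw [Set.mem_setOf_eq, e12]
      show (2 ≤ detZ (0,1) (-p,-q)) ↔ _
      simp [detZ]
      omega
    · rw [Set.mem_setOf_eq, e20]
      show (2 ≤ detZ (-p,-q) (1,0)) ↔ _
      simp [detZ]
      omega
  rw [numSingular, hset, Set.ncard_pair (by decide)]

end TriangleHelpers

/-- Classification of triangular fan data with exactly two singular cones. -/
theorem triangle_two_singular :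
    (∀ v : ZMod 3 → ℤ × ℤ, IsCompleteFanData 3 v → numSingular 3 v = 2 →
      IsLDPFanData 3 v ∧
      ∃ p q : ℤ, 2 ≤ p ∧ 2 ≤ q ∧ Int.gcd p q = 1 ∧ FanEquiv v (data3 p q)) ∧
    (∀ p q : ℤ, 2 ≤ p → 2 ≤ q → Int.gcd p q = 1 →
      IsLDPFanData 3 (data3 p q) ∧ numSingular 3 (data3 p q) = 2) := by
  constructor
  · intro v hv hns
    have hprim := hv.2.1
    have hdet := hv.2.2.1
    exact ⟨⟨hv, fanF_three v hdet⟩, forward v hprim hdet hns⟩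
  · intro p q hp hq hgcd
    have hc := data3_complete hp hq hgcd
    exact ⟨⟨hc, fanF_three _ hc.2.2.1⟩, data3_numSingular hp hq⟩
end

section
/- Let v_1, …, v_d be LDP fan data with d ≥ 4 and exactly two singular cones. Then there is a chain of LDP fan data of lengths d, d−1, …, 4, each with exactly two singular cones, starting from the given data, in which each data of length m (5 ≤ m ≤ d) contains an index k with v_k = v_{k−1} + v_{k+1} and det(v_{k−1}, v_k) = det(v_k, v_{k+1}) = 1, and the data of length m−1 is obtained by deleting v_k. (Equivalently, X(Δ) is obtained from a toric log del Pezzo surface of Picard number two by a sequence of blow-ups at nonsingular torus-fixed points, all intermediate surfaces being log del Pezzo.) -/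
namespace TwoSing


def detR (u w : ℝ × ℝ) : ℝ := u.1 * w.2 - u.2 * w.1

lemma detR_cast (u w : ℤ × ℤ) : detR (toR2 u) (toR2 w) = (detZ u w : ℝ) := by
  simp [detR, toR2, detZ]

lemma detZ_anti (x y : ℤ × ℤ) : detZ y x = -detZ x y := by simp [detZ]; ring

lemma continuous_detR_left (u : ℝ × ℝ) : Continuous (fun x => detR u x) := by
  unfold detR; fun_prop

lemma continuous_detR_right (w : ℝ × ℝ) : Continuous (fun x => detR x w) := by
  unfold detR; fun_prop

lemma mem_coneOf_iff {u w : ℤ × ℤ} (hd : 0 < detZ u w) (x : ℝ × ℝ) :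
    x ∈ coneOf u w ↔ 0 ≤ detR (toR2 u) x ∧ 0 ≤ detR x (toR2 w) := by
  have hD : (0:ℝ) < (detZ u w : ℝ) := by exact_mod_cast hd
  constructor
  · rintro ⟨a, b, ha, hb, rfl⟩
    constructor
    · have : detR (toR2 u) (a • toR2 u + b • toR2 w) = b * (detZ u w : ℝ) := by
        simp [detR, toR2, detZ]; ring
      rw [this]; positivity
    · have : detR (a • toR2 u + b • toR2 w) (toR2 w) = a * (detZ u w : ℝ) := by
        simp [detR, toR2, detZ]; ring
      rw [this]; positivity
  · rintro ⟨h1, h2⟩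
    refine ⟨detR x (toR2 w) / (detZ u w : ℝ), detR (toR2 u) x / (detZ u w : ℝ),
      by positivity, by positivity, ?_⟩
    have : x.1 * (detZ u w : ℝ) = detR x (toR2 w) * (u.1:ℝ) + detR (toR2 u) x * (w.1:ℝ) := by
      simp [detR, toR2, detZ]; ring
    have h2' : x.2 * (detZ u w : ℝ) = detR x (toR2 w) * (u.2:ℝ) + detR (toR2 u) x * (w.2:ℝ) := by
      simp [detR, toR2, detZ]; ring
    have hD' : (detZ u w : ℝ) ≠ 0 := ne_of_gt hD
    ext
    · simp only [Prod.fst_add, Prod.smul_fst, smul_eq_mul]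
      rw [div_mul_eq_mul_div, div_mul_eq_mul_div, ← add_div, eq_div_iff hD']
      simp [detR, toR2, detZ]; ring
    · simp only [Prod.snd_add, Prod.smul_snd, smul_eq_mul]
      rw [div_mul_eq_mul_div, div_mul_eq_mul_div, ← add_div, eq_div_iff hD']
      simp [detR, toR2, detZ]; ring

lemma strict_subset_interior {u w : ℤ × ℤ} (hd : 0 < detZ u w) :
    {x : ℝ × ℝ | 0 < detR (toR2 u) x ∧ 0 < detR x (toR2 w)} ⊆ interior (coneOf u w) := by
  apply interior_maximal
  · intro x hx
    exact (mem_coneOf_iff hd x).2 ⟨le_of_lt hx.1, le_of_lt hx.2⟩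
  · exact IsOpen.inter (isOpen_lt continuous_const (continuous_detR_left _))
      (isOpen_lt continuous_const (continuous_detR_right _))

lemma coneOf_union {a b c : ℤ × ℤ} (h : b = a + c) :
    coneOf a c = coneOf a b ∪ coneOf b c := by
  have hb : toR2 b = toR2 a + toR2 c := by
    simp [toR2, h]
  ext x
  constructor
  · rintro ⟨α, γ, hα, hγ, rfl⟩
    rcases le_total γ α with hle | hle
    · left
      exact ⟨α - γ, γ, by linarith, hγ, by rw [hb]; ext <;> (simp [toR2]; try ring)⟩
    · right
      exact ⟨α, γ - α, hα, by linarith, by rw [hb]; ext <;> (simp [toR2]; try ring)⟩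
  · rintro (⟨α, β, hα, hβ, rfl⟩ | ⟨β, γ, hβ, hγ, rfl⟩)
    · exact ⟨α + β, β, by linarith, hβ, by rw [hb]; ext <;> (simp [toR2]; try ring)⟩
    · exact ⟨β, β + γ, hβ, by linarith, by rw [hb]; ext <;> (simp [toR2]; try ring)⟩

lemma half_subset {a b c : ℤ × ℤ} (h1 : 0 < detZ a b) (h2 : 0 < detZ b c)
    (h3 : detZ a c ≤ 0) {x : ℝ × ℝ} (hx : 0 ≤ detR (toR2 a) x) :
    x ∈ coneOf a b ∪ coneOf b c := by
  by_cases hxb : 0 ≤ detR x (toR2 b)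
  · left; exact (mem_coneOf_iff h1 x).2 ⟨hx, hxb⟩
  · push_neg at hxb
    right
    apply (mem_coneOf_iff h2 x).2
    constructor
    · have : detR (toR2 b) x = -detR x (toR2 b) := by simp [detR]; ring
      rw [this]; linarith
    · -- detR x c * det a b = detR x b * det a c + detR a x * det b c
      have key : detR x (toR2 c) * (detZ a b : ℝ) =
          detR x (toR2 b) * (detZ a c : ℝ) + detR (toR2 a) x * (detZ b c : ℝ) := by
        simp [detR, toR2, detZ]; ring
      have hab : (0:ℝ) < (detZ a b : ℝ) := by exact_mod_cast h1
      have hbc : (0:ℝ) < (detZ b c : ℝ) := by exact_mod_cast h2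
      have hac : (detZ a c : ℝ) ≤ 0 := by exact_mod_cast h3
      nlinarith [mul_nonneg hx hbc.le, mul_nonneg (neg_nonneg.2 (le_of_lt hxb)) (neg_nonneg.2 hac)]



lemma exists_avoid (l : List (ℤ × ℤ)) (hl : ∀ z ∈ l, z ≠ 0) (U : Set (ℝ × ℝ))
    (hU : IsOpen U) (hne : U.Nonempty) :
    ∃ y ∈ U, ∀ z ∈ l, detR (toR2 z) y ≠ 0 := by
  induction l generalizing U with
  | nil => obtain ⟨y, hy⟩ := hne; exact ⟨y, hy, by simp⟩
  | cons z l ih =>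
    have hz : z ≠ 0 := hl z List.mem_cons_self
    -- U ∩ {x | detR z x ≠ 0} is open and nonempty
    have hUopen : IsOpen (U ∩ {x | detR (toR2 z) x ≠ 0}) :=
      hU.inter (isOpen_ne_fun (continuous_detR_left _) continuous_const)
    have hUne : (U ∩ {x | detR (toR2 z) x ≠ 0}).Nonempty := by
      obtain ⟨y0, hy0⟩ := hne
      by_cases h0 : detR (toR2 z) y0 ≠ 0
      · exact ⟨y0, hy0, h0⟩
      · push_neg at h0
        -- perturb in direction w = (-z.2, z.1)
        set w : ℝ × ℝ := (-(z.2:ℝ), (z.1:ℝ)) with hw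
        have hzw : detR (toR2 z) w = (z.1:ℝ)^2 + (z.2:ℝ)^2 := by
          simp [detR, toR2, hw]; ring
        have hzwpos : 0 < detR (toR2 z) w := by
          rw [hzw]
          have hor : z.1 ≠ 0 ∨ z.2 ≠ 0 := by
            by_contra hc; push_neg at hc
            exact hz (Prod.ext hc.1 hc.2)
          rcases hor with h | h
          · have h' : ((z.1:ℤ):ℝ) ≠ 0 := by exact_mod_cast h
            have : (0:ℝ) < (z.1:ℝ)^2 := by positivity
            nlinarith [sq_nonneg ((z.2:ℤ):ℝ)]
          · have h' : ((z.2:ℤ):ℝ) ≠ 0 := by exact_mod_cast h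
            have : (0:ℝ) < (z.2:ℝ)^2 := by positivity
            nlinarith [sq_nonneg ((z.1:ℤ):ℝ)]
        obtain ⟨ε, hε, hball⟩ := Metric.isOpen_iff.1 hU y0 hy0
        have hwn : (0:ℝ) ≤ ‖w‖ := norm_nonneg w
        set t : ℝ := ε / (2 * (‖w‖ + 1)) with ht
        have htpos : 0 < t := by positivity
        have hmem : y0 + t • w ∈ U := by
          apply hball
          simp only [Metric.mem_ball, dist_eq_norm]
          have he : y0 + t • w - y0 = t • w := by abel
          rw [he, norm_smul]
          rw [Real.norm_eq_abs, abs_of_pos htpos, ht, div_mul_eq_mul_div,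
            div_lt_iff₀ (by positivity)]
          nlinarith
        have hexpand : detR (toR2 z) (y0 + t • w) =
            detR (toR2 z) y0 + t * detR (toR2 z) w := by
          simp [detR]; ring
        refine ⟨y0 + t • w, hmem, ?_⟩
        rw [Set.mem_setOf_eq, hexpand, h0]
        simp only [zero_add]
        exact mul_ne_zero (ne_of_gt htpos) (ne_of_gt hzwpos)
    obtain ⟨y, ⟨hyU, hyz⟩, hyl⟩ := ih (fun a ha => hl a (List.mem_cons_of_mem _ ha)) _ hUopen hUne
    exact ⟨y, hyU, by
      intro a ha
      rcases List.mem_cons.1 ha with rfl | ha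
      · exact hyz
      · exact hyl a ha⟩



lemma parallel_eq {x y : ℤ × ℤ} (hx : Int.gcd x.1 x.2 = 1) (hy : Int.gcd y.1 y.2 = 1)
    (h : detZ x y = 0) : y = x ∨ y = -x := by
  obtain ⟨u, w, huw⟩ : ∃ u w, u * x.1 + w * x.2 = 1 := by
    have := Int.isCoprime_iff_gcd_eq_one.2 hx
    obtain ⟨u, w, h'⟩ := this
    exact ⟨u, w, h'⟩
  set c : ℤ := u * y.1 + w * y.2 with hc
  have h' : x.1 * y.2 - x.2 * y.1 = 0 := h
  have hy1 : y.1 = c * x.1 := by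
    rw [hc]; linear_combination (-y.1) * huw + (-w) * h'
  have hy2 : y.2 = c * x.2 := by
    rw [hc]; linear_combination (-y.2) * huw + u * h'
  have hgc : Int.gcd (c * x.1) (c * x.2) = c.natAbs * Int.gcd x.1 x.2 := Int.gcd_mul_left c x.1 x.2
  rw [← hy1, ← hy2, hy, hx, mul_one] at hgc
  rcases Int.natAbs_eq_iff.1 hgc.symm with h1 | h1
  · left
    refine Prod.ext ?_ ?_
    · rw [hy1, h1]; push_cast; ring
    · rw [hy2, h1]; push_cast; ring
  · right
    refine Prod.ext ?_ ?_
    · rw [hy1, h1]; push_cast; simp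
    · rw [hy2, h1]; push_cast; simp

-- determinant expansion in a unimodular basis
lemma det_expand {a b : ℤ × ℤ} (hab : detZ a b = 1) (x y : ℤ × ℤ) :
    detZ x y = detZ x b * detZ a y - detZ a x * detZ y b := by
  have key : detZ x y * detZ a b = detZ x b * detZ a y + detZ a x * detZ b y := by
    simp [detZ]; ring
  rw [hab, mul_one] at key
  rw [key, detZ_anti b y]; ring

-- Cramer: coordinates
lemma cramer_fst {a b : ℤ × ℤ} (hab : detZ a b = 1) (x : ℤ × ℤ) :
    x.1 = detZ x b * a.1 + detZ a x * b.1 := by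
  have : x.1 * detZ a b = detZ x b * a.1 + detZ a x * b.1 := by simp [detZ]; ring
  rw [hab, mul_one] at this; exact this

lemma cramer_snd {a b : ℤ × ℤ} (hab : detZ a b = 1) (x : ℤ × ℤ) :
    x.2 = detZ x b * a.2 + detZ a x * b.2 := by
  have : x.2 * detZ a b = detZ x b * a.2 + detZ a x * b.2 := by simp [detZ]; ring
  rw [hab, mul_one] at this; exact this

-- middle vector is the sum when all three dets are 1
lemma eq_sum_of_dets {a b c : ℤ × ℤ} (hab : detZ a b = 1) (hbc : detZ b c = 1)
    (hac : detZ a c = 1) : b = a + c := by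
  have h1 := cramer_fst hab c
  have h2 := cramer_snd hab c
  have hcb : detZ c b = -1 := by rw [detZ_anti]; omega
  rw [hcb, hac] at h1 h2
  have : b.1 = a.1 + c.1 := by linarith
  have h2' : b.2 = a.2 + c.2 := by linarith
  exact Prod.ext this h2'

-- gcd invariance under unimodular coordinates
lemma gcd_coords {a b : ℤ × ℤ} (hab : detZ a b = 1) (x : ℤ × ℤ)
    (hx : Int.gcd x.1 x.2 = 1) : Int.gcd (detZ x b) (detZ a x) = 1 := by
  set g : ℕ := Int.gcd (detZ x b) (detZ a x) with hg
  have h1 : (g:ℤ) ∣ detZ x b := Int.gcd_dvd_left _ _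
  have h2 : (g:ℤ) ∣ detZ a x := Int.gcd_dvd_right _ _
  have d1 : (g:ℤ) ∣ x.1 := by rw [cramer_fst hab x]; exact dvd_add (h1.mul_right _) (h2.mul_right _)
  have d2 : (g:ℤ) ∣ x.2 := by rw [cramer_snd hab x]; exact dvd_add (h1.mul_right _) (h2.mul_right _)
  have : (g:ℤ) ∣ (Int.gcd x.1 x.2 : ℤ) := Int.dvd_coe_gcd d1 d2
  rw [hx] at this
  have := Int.eq_one_of_dvd_one (by positivity) this
  exact_mod_cast this





lemma detR_anti (x y : ℝ × ℝ) : detR y x = -detR x y := by simp [detR]; ring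
lemma detZ_neg_left (x y : ℤ × ℤ) : detZ (-x) y = -detZ x y := by simp [detZ]; ring
lemma detZ_self (x : ℤ × ℤ) : detZ x x = 0 := by simp [detZ]; ring




lemma prim_ne_zero {x : ℤ × ℤ} (hx : Int.gcd x.1 x.2 = 1) : x ≠ 0 := by
  intro h; rw [h] at hx; simp [Int.gcd] at hx

section Fan
variable {m : ℕ} {v : ZMod m → ℤ × ℤ}
variable (hg : ∀ i, Int.gcd (v i).1 (v i).2 = 1)
variable (hdet : ∀ i, 1 ≤ detZ (v i) (v (i + 1)))
variable (hdisj : ∀ i j, i ≠ j → interior (coneOf (v i) (v (i + 1))) ∩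
    interior (coneOf (v j) (v (j + 1))) = ∅)

include hg hdet hdisj in
lemma core_no_strict (k j : ZMod m) (hj1 : j ≠ k - 1) (hj2 : j ≠ k)
    (hbad : detZ (v (k - 1)) (v (k + 1)) ≤ 0) (x : ℝ × ℝ)
    (hx1 : 0 < detR (toR2 (v (k - 1))) x) (hx2 : 0 < detR (toR2 (v j)) x)
    (hx3 : 0 < detR x (toR2 (v (j + 1)))) : False := by
  have hk1 : (k - 1) + 1 = k := by ring
  have hdk1 : 0 < detZ (v (k - 1)) (v k) := by
    have := hdet (k - 1); rw [hk1] at this; omega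
  have hdk : 0 < detZ (v k) (v (k + 1)) := by have := hdet k; omega
  set U : Set (ℝ × ℝ) := {y | 0 < detR (toR2 (v (k - 1))) y ∧ 0 < detR (toR2 (v j)) y ∧
      0 < detR y (toR2 (v (j + 1)))} with hU
  have hUopen : IsOpen U := by
    apply IsOpen.inter (isOpen_lt continuous_const (continuous_detR_left _))
    exact IsOpen.inter (isOpen_lt continuous_const (continuous_detR_left _))
      (isOpen_lt continuous_const (continuous_detR_right _))
  have hUne : U.Nonempty := ⟨x, hx1, hx2, hx3⟩
  obtain ⟨y, hyU, hyl⟩ := exists_avoid [v (k - 1), v k, v (k + 1)]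
    (by intro z hz; simp at hz; rcases hz with rfl | rfl | rfl <;> exact prim_ne_zero (hg _))
    U hUopen hUne
  obtain ⟨hy1, hy2, hy3⟩ := hyU
  have havk : detR (toR2 (v k)) y ≠ 0 := hyl _ (by simp)
  have hyint : y ∈ interior (coneOf (v j) (v (j + 1))) :=
    strict_subset_interior (by have := hdet j; omega) ⟨hy2, hy3⟩
  have hmem : y ∈ coneOf (v (k - 1)) (v k) ∪ coneOf (v k) (v (k + 1)) :=
    half_subset hdk1 hdk hbad (le_of_lt hy1)
  have havk' : detR y (toR2 (v k)) ≠ 0 := by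
    rw [detR_anti]; exact neg_ne_zero.2 havk
  have havk1' : detR y (toR2 (v (k + 1))) ≠ 0 := by
    rw [detR_anti]; exact neg_ne_zero.2 (hyl _ (by simp))
  rcases hmem with hc | hc
  · have hmc := (mem_coneOf_iff hdk1 y).1 hc
    have hstrict : y ∈ interior (coneOf (v (k - 1)) (v ((k - 1) + 1))) := by
      rw [hk1]
      exact strict_subset_interior hdk1 ⟨hy1, hmc.2.lt_of_ne (Ne.symm havk')⟩
    have hd := hdisj (k - 1) j (by intro h; exact hj1 h.symm)
    exact (hd ▸ Set.mem_inter hstrict hyint : y ∈ (∅ : Set (ℝ × ℝ)))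
  · have hmc := (mem_coneOf_iff hdk y).1 hc
    have hstrict : y ∈ interior (coneOf (v k) (v (k + 1))) :=
      strict_subset_interior hdk ⟨hmc.1.lt_of_ne (Ne.symm havk),
        hmc.2.lt_of_ne (Ne.symm havk1')⟩
    have hd := hdisj k j (by intro h; exact hj2 h.symm)
    exact (hd ▸ Set.mem_inter hstrict hyint : y ∈ (∅ : Set (ℝ × ℝ)))

-- construct strict point near a boundary point
lemma exists_strict_near (e u w : ℤ × ℤ) (huw : 1 ≤ detZ u w) (z : ℝ × ℝ)
    (hz : 0 < detR (toR2 e) z) (hzu : 0 ≤ detR (toR2 u) z) (hzw : 0 ≤ detR z (toR2 w)) :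
    ∃ x : ℝ × ℝ, 0 < detR (toR2 e) x ∧ 0 < detR (toR2 u) x ∧ 0 < detR x (toR2 w) := by
  set s : ℝ × ℝ := toR2 u + toR2 w with hs
  set C : ℝ := detR (toR2 e) s with hC
  set D : ℝ := detR (toR2 e) z with hD
  set t : ℝ := D / (2 * (|C| + 1)) with ht
  have habs : (0:ℝ) ≤ |C| := abs_nonneg C
  have htpos : 0 < t := by rw [ht]; positivity
  have hduw : (0:ℝ) < (detZ u w : ℝ) := by exact_mod_cast (by omega : (0:ℤ) < detZ u w)
  refine ⟨z + t • s, ?_, ?_, ?_⟩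
  · have hexp : detR (toR2 e) (z + t • s) = D + t * C := by simp [detR, hD, hC]; ring
    rw [hexp]
    have h1 : t * C ≥ -(t * |C|) := by nlinarith [neg_abs_le C]
    have h2 : t * |C| ≤ D / 2 := by
      rw [ht, div_mul_eq_mul_div, div_le_div_iff₀ (by positivity) (by norm_num)]
      nlinarith
    linarith
  · have hexp : detR (toR2 u) (z + t • s) = detR (toR2 u) z + t * (detZ u w : ℝ) := by
      simp [detR, hs, toR2, detZ]; ring
    rw [hexp]; nlinarith
  · have hexp : detR (z + t • s) (toR2 w) = detR z (toR2 w) + t * (detZ u w : ℝ) := by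
      simp [detR, hs, toR2, detZ]; ring
    rw [hexp]; nlinarith

include hg hdet hdisj in
lemma bad_pushes (k j : ZMod m) (hj1 : j ≠ k - 1) (hj2 : j ≠ k)
    (hbad : detZ (v (k - 1)) (v (k + 1)) ≤ 0) :
    detZ (v (k - 1)) (v j) ≤ 0 ∧ detZ (v (k - 1)) (v (j + 1)) ≤ 0 := by
  constructor
  · by_contra hcon; push_neg at hcon
    have hz : 0 < detR (toR2 (v (k - 1))) (toR2 (v j)) := by
      rw [detR_cast]; exact_mod_cast hcon
    obtain ⟨x, h1, h2, h3⟩ := exists_strict_near (v (k - 1)) (v j) (v (j + 1)) (hdet j)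
      (toR2 (v j)) hz (by rw [detR_cast, detZ_self]; norm_num)
      (by rw [detR_cast]; exact_mod_cast (by have := hdet j; omega : (0:ℤ) ≤ detZ (v j) (v (j+1))))
    exact core_no_strict hg hdet hdisj k j hj1 hj2 hbad x h1 h2 h3
  · by_contra hcon; push_neg at hcon
    have hz : 0 < detR (toR2 (v (k - 1))) (toR2 (v (j + 1))) := by
      rw [detR_cast]; exact_mod_cast hcon
    obtain ⟨x, h1, h2, h3⟩ := exists_strict_near (v (k - 1)) (v j) (v (j + 1)) (hdet j)
      (toR2 (v (j + 1))) hz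
      (by rw [detR_cast]; exact_mod_cast (by have := hdet j; omega : (0:ℤ) ≤ detZ (v j) (v (j+1))))
      (by rw [detR_cast, detZ_self]; norm_num)
    exact core_no_strict hg hdet hdisj k j hj1 hj2 hbad x h1 h2 h3

include hg hdet hdisj in
lemma no_two_bad (hm : 5 ≤ m) (k l : ZMod m)
    (d1 : l - 1 ≠ k - 1) (d2 : l - 1 ≠ k) (d3 : l ≠ k - 1) (d4 : l ≠ k)
    (hbk : detZ (v (k - 1)) (v (k + 1)) ≤ 0)
    (hbl : detZ (v (l - 1)) (v (l + 1)) ≤ 0) : False := by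
  haveI : NeZero m := ⟨by omega⟩
  have hl1 : (l - 1) + 1 = l := by ring
  have hk1 : (k - 1) + 1 = k := by ring
  have c1 : detZ (v (k - 1)) (v (l - 1)) ≤ 0 :=
    (bad_pushes hg hdet hdisj k (l - 1) d1 d2 hbk).1
  have c2 : detZ (v (l - 1)) (v (k - 1)) ≤ 0 :=
    (bad_pushes hg hdet hdisj l (k - 1) (fun h => d1 h.symm) (fun h => d3 h.symm) hbl).1
  have c0 : detZ (v (k - 1)) (v (l - 1)) = 0 := by
    have := detZ_anti (v (k - 1)) (v (l - 1)); omega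
  rcases parallel_eq (hg (k - 1)) (hg (l - 1)) c0 with heq | heq
  · -- v (l-1) = v (k-1)
    have c3 : detZ (v (k - 1)) (v ((l - 1) + 1)) ≤ 0 :=
      (bad_pushes hg hdet hdisj k (l - 1) d1 d2 hbk).2
    have hpos := hdet (l - 1)
    rw [heq] at hpos
    omega
  · -- v (l-1) = - v (k-1)
    obtain ⟨j, hjF⟩ : ∃ j : ZMod m, j ∉ ({k - 1, k, l - 1, l} : Finset (ZMod m)) := by
      by_contra hall; push_neg at hall
      have hsub : (Finset.univ : Finset (ZMod m)) ⊆ {k - 1, k, l - 1, l} :=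
        fun j _ => hall j
      have h1 := Finset.card_le_card hsub
      rw [Finset.card_univ, ZMod.card] at h1
      have h2 : ({k - 1, k, l - 1, l} : Finset (ZMod m)).card ≤ 4 := by
        apply le_trans (Finset.card_insert_le _ _)
        have := Finset.card_insert_le k ({l - 1, l} : Finset (ZMod m))
        have := Finset.card_insert_le (l - 1) ({l} : Finset (ZMod m))
        simp at *; omega
      omega
    simp only [Finset.mem_insert, Finset.mem_singleton, not_or] at hjF
    obtain ⟨hj1, hj2, hj3, hj4⟩ := hjF
    have c4 := bad_pushes hg hdet hdisj k j hj1 hj2 hbk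
    have c5 := bad_pushes hg hdet hdisj l j hj3 hj4 hbl
    rw [heq] at c5
    simp only [detZ_neg_left] at c5
    have e1 : detZ (v (k - 1)) (v j) = 0 := by omega
    have e2 : detZ (v (k - 1)) (v (j + 1)) = 0 := by omega
    have detZ_neg_right : ∀ x y : ℤ × ℤ, detZ x (-y) = -detZ x y := by
      intro x y; simp [detZ]; ring
    rcases parallel_eq (hg (k - 1)) (hg j) e1 with q1 | q1 <;>
      rcases parallel_eq (hg (k - 1)) (hg (j + 1)) e2 with q2 | q2 <;>
      (have hjj := hdet j
       rw [q1, q2] at hjj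
       simp only [detZ_neg_left, detZ_neg_right, neg_neg, detZ_self, neg_zero] at hjj
       omega)
end Fan

lemma no_unit_mul {a c : ℤ} (ha : a ≤ -2) (h : a * c = 1) : False := by
  rcases lt_trichotomy c 0 with hc | hc | hc
  · have h1 : 2 * 1 ≤ (-a) * (-c) := by
      apply mul_le_mul (by linarith) (by linarith) (by norm_num) (by linarith)
    nlinarith
  · rw [hc, mul_zero] at h; exact absurd h (by norm_num)
  · have h1 : a * c ≤ -2 * 1 := by
      have := mul_le_mul_of_nonneg_right (by linarith : a ≤ -2) (by linarith : (0:ℤ) ≤ c)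
      nlinarith
    linarith

/-- d = 5, singular cones adjacent: pattern sm sm sm sing sing. -/
lemma case1 {w1 w2 w3 w4 w5 : ℤ × ℤ}
    (h12 : detZ w1 w2 = 1) (h23 : detZ w2 w3 = 1) (h34 : detZ w3 w4 = 1)
    (h45 : 2 ≤ detZ w4 w5) (h51 : 2 ≤ detZ w5 w1)
    (bad2 : detZ w1 w3 ≤ 0) (bad3 : detZ w2 w4 ≤ 0)
    (fb5 : 1 ≤ detZ w4 w1) (fb1 : 1 ≤ detZ w5 w2)
    (f1 : 1 ≤ detZ w5 w1 + detZ w1 w2 + detZ w2 w5)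
    (f4 : 1 ≤ detZ w3 w4 + detZ w4 w5 + detZ w5 w3)
    (prim5 : Int.gcd w5.1 w5.2 = 1) : False := by
  have dexp := det_expand h12
  set X4 := detZ w4 w2 with hX4d
  set X5 := detZ w5 w2 with hX5d
  set Y3 := detZ w1 w3 with hY3d
  set Y4 := detZ w1 w4 with hY4d
  set Y5 := detZ w1 w5 with hY5d
  have hgcd : Int.gcd X5 Y5 = 1 := gcd_coords h12 w5 prim5
  have hX3 : detZ w3 w2 = -1 := by
    have h := dexp w2 w3; rw [h23, detZ_self, h12] at h; linarith
  have hb3 : 0 ≤ X4 := by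
    have h := dexp w2 w4; rw [detZ_self, h12] at h; linarith
  have hb2 : Y3 ≤ 0 := bad2
  have h34' : -Y4 - Y3 * X4 = 1 := by
    have h := dexp w3 w4; rw [h34, hX3] at h; linarith
  have hfb5 : 1 ≤ -Y4 := by
    have h := dexp w4 w1; rw [detZ_self, h12] at h; linarith
  have hu : 2 ≤ -Y5 := by
    have h := dexp w5 w1; rw [detZ_self, h12] at h; linarith
  have hx : 1 ≤ X5 := fb1
  have e51 : detZ w5 w1 = -Y5 := by
    have h := dexp w5 w1; rw [detZ_self, h12] at h; linarith
  have e25 : detZ w2 w5 = -X5 := by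
    have h := dexp w2 w5; rw [detZ_self, h12] at h; linarith
  have hxu : X5 ≤ -Y5 := by rw [e51, h12, e25] at f1; linarith
  have hf4 : 0 ≤ (X4 * Y5 - Y4 * X5) + (X5 * Y3 + Y5) := by
    have ht : detZ w4 w5 = X4 * Y5 - Y4 * X5 := dexp w4 w5
    have hw53 : detZ w5 w3 = X5 * Y3 + Y5 := by
      have h := dexp w5 w3; rw [hX3] at h; linarith
    rw [h34, ht, hw53] at f4; linarith
  clear_value X4 X5 Y3 Y4 Y5
  clear dexp f1 f4 hX3 e51 e25 h12 h23 h34 h45 h51 bad2 bad3 fb5 fb1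
    hX4d hX5d hY3d hY4d hY5d prim5
  have hb23 : Y3 * X4 = 0 := by
    have hle : Y3 * X4 ≤ 0 := mul_nonpos_of_nonpos_of_nonneg hb2 hb3
    linarith
  have hY4 : Y4 = -1 := by linarith
  have hboth : Y3 = 0 ∧ X4 = 0 := by
    rcases mul_eq_zero.1 hb23 with h | h
    · refine ⟨h, ?_⟩
      rw [h, hY4] at hf4
      have h0 : X4 * Y5 = 0 := by
        have hle : X4 * Y5 ≤ 0 := mul_nonpos_of_nonneg_of_nonpos hb3 (by linarith)
        nlinarith
      rcases mul_eq_zero.1 h0 with h' | h'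
      · exact h'
      · omega
    · refine ⟨?_, h⟩
      rw [h, hY4] at hf4
      have h0 : X5 * Y3 = 0 := by
        have hle : X5 * Y3 ≤ 0 := mul_nonpos_of_nonneg_of_nonpos (by linarith) hb2
        nlinarith
      rcases mul_eq_zero.1 h0 with h' | h'
      · omega
      · exact h'
  obtain ⟨hY30, hX40⟩ := hboth
  rw [hY30, hX40, hY4] at hf4
  have hXu : X5 = -Y5 := by nlinarith
  have hY5X : Y5 = -X5 := by omega
  have hdvd : X5 ∣ ((Int.gcd X5 Y5 : ℕ) : ℤ) :=
    Int.dvd_coe_gcd dvd_rfl (by rw [hY5X]; exact dvd_neg.2 dvd_rfl)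
  rw [hgcd] at hdvd
  have := Int.le_of_dvd one_pos hdvd
  omega

/-- d = 5, pattern sm sm sing sm sing; bad vertex between cones 1,2. -/
lemma case2 {w1 w2 w3 w4 w5 : ℤ × ℤ}
    (h12 : detZ w1 w2 = 1) (h23 : detZ w2 w3 = 1) (h34 : 2 ≤ detZ w3 w4)
    (h45 : detZ w4 w5 = 1) (h51 : 2 ≤ detZ w5 w1)
    (bad2 : detZ w1 w3 ≤ 0) (fbB : 1 ≤ detZ w4 w1)
    (f1 : 1 ≤ detZ w5 w1 + detZ w1 w2 + detZ w2 w5)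
    (f4 : 1 ≤ detZ w3 w4 + detZ w4 w5 + detZ w5 w3)
    (f5 : 1 ≤ detZ w4 w5 + detZ w5 w1 + detZ w1 w4) : False := by
  have dexp := det_expand h12
  set X4 := detZ w4 w2 with hX4d
  set X5 := detZ w5 w2 with hX5d
  set Y3 := detZ w1 w3 with hY3d
  set Y4 := detZ w1 w4 with hY4d
  set Y5 := detZ w1 w5 with hY5d
  have hX3 : detZ w3 w2 = -1 := by
    have h := dexp w2 w3; rw [h23, detZ_self, h12] at h; linarith
  have hb2 : Y3 ≤ 0 := bad2
  have hP : 1 ≤ -Y4 := by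
    have h := dexp w4 w1; rw [detZ_self, h12] at h; linarith
  have hu : 2 ≤ -Y5 := by
    have h := dexp w5 w1; rw [detZ_self, h12] at h; linarith
  have e51 : detZ w5 w1 = -Y5 := by
    have h := dexp w5 w1; rw [detZ_self, h12] at h; linarith
  have e25 : detZ w2 w5 = -X5 := by
    have h := dexp w2 w5; rw [detZ_self, h12] at h; linarith
  have A4 : 2 ≤ -Y4 - Y3 * X4 := by
    have h := dexp w3 w4; rw [hX3] at h; linarith
  have A2 : X4 * Y5 - Y4 * X5 = 1 := by
    have h := dexp w4 w5; rw [h45] at h; linarith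
  have A3 : X5 ≤ -Y5 := by rw [e51, h12, e25] at f1; linarith
  have A44 : 0 ≤ -Y4 - Y3 * X4 + X5 * Y3 + Y5 := by
    have h34e : detZ w3 w4 = -Y4 - Y3 * X4 := by
      have h := dexp w3 w4; rw [hX3] at h; linarith
    have hw53 : detZ w5 w3 = X5 * Y3 + Y5 := by
      have h := dexp w5 w3; rw [hX3] at h; linarith
    rw [h34e, h45, hw53] at f4; linarith
  have A5 : -Y4 ≤ -Y5 := by rw [h45, e51] at f5; linarith
  clear_value X4 X5 Y3 Y4 Y5
  clear dexp f1 f4 f5 hX3 e51 e25 h34 h45 h51 bad2 fbB h12 h23 hX4d hX5d hY3d hY4d hY5d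
  rcases eq_or_lt_of_le hb2 with hY30 | hY3neg
  · -- Y3 = 0
    rw [← hY30] at A44
    have hPu : Y4 = Y5 := by nlinarith
    rw [hPu] at A2
    exact no_unit_mul (by linarith : Y5 ≤ -2) (by linear_combination A2 : Y5 * (X4 - X5) = 1)
  · have hY3 : Y3 ≤ -1 := by linarith
    have s1 : X5 ≤ X4 := by
      by_contra hcon; push_neg at hcon
      have h1 : 1 * 1 ≤ (-Y3) * (X5 - X4) :=
        mul_le_mul (by linarith) (by linarith) (by norm_num) (by linarith)
      nlinarith
    have s2 : X4 ≤ -1 := by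
      by_contra hcon; push_neg at hcon
      have hX4nn : 0 ≤ X4 := by linarith
      have h1 : (-Y4) * X5 ≤ (-Y4) * X4 := mul_le_mul_of_nonneg_left s1 (by linarith)
      have h2 : 0 ≤ X4 * ((-Y5) - (-Y4)) := mul_nonneg hX4nn (by linarith)
      nlinarith
    have s3 : -Y4 + 1 ≤ -Y5 := by
      rcases eq_or_lt_of_le A5 with heq | hlt
      · exfalso
        have hY45 : Y4 = Y5 := by linarith
        rw [hY45] at A2
        exact no_unit_mul (by linarith : Y5 ≤ -2)
          (by linear_combination A2 : Y5 * (X4 - X5) = 1)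
      · linarith
    have s4 : 1 ≤ X4 - X5 := by
      by_contra hcon; push_neg at hcon
      have h1 : 0 ≤ (-Y3) * (X5 - X4) := mul_nonneg (by linarith) (by linarith)
      nlinarith
    -- final chain
    have t1 : (-X4) * ((-Y5) - (-Y4)) = 1 + (-Y4) * (X4 - X5) := by linear_combination A2
    have t2 : (-X4) * ((-Y5) - (-Y4)) ≤ (-X4) * ((-Y3) * (X4 - X5)) := by
      have h1 : (-Y5) - (-Y4) ≤ (-Y3) * (X4 - X5) := by nlinarith
      exact mul_le_mul_of_nonneg_left h1 (by linarith)
    have t3 : (-X4) * ((-Y3) * (X4 - X5)) ≤ ((-Y4) - 2) * (X4 - X5) := by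
      have h1 : (-Y3) * (-X4) ≤ (-Y4) - 2 := by nlinarith
      have h2 : ((-Y3) * (-X4)) * (X4 - X5) ≤ ((-Y4) - 2) * (X4 - X5) :=
        mul_le_mul_of_nonneg_right h1 (by linarith)
      nlinarith [h2]
    nlinarith [t1, t2, t3, s4]

/-- d = 6, pattern sm sm sm sing sm sing; bad vertices between cones 1,2 and 2,3. -/
lemma case3 {w1 w2 w3 w4 w5 w6 : ℤ × ℤ}
    (h12 : detZ w1 w2 = 1) (h23 : detZ w2 w3 = 1) (h34 : detZ w3 w4 = 1)
    (h45 : 2 ≤ detZ w4 w5) (h56 : detZ w5 w6 = 1) (h61 : 2 ≤ detZ w6 w1)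
    (bad2 : detZ w1 w3 ≤ 0) (bad3 : detZ w2 w4 ≤ 0)
    (hC1 : detZ w1 w4 ≤ 0) (hC2 : detZ w2 w5 ≤ 0)
    (fbA : 1 ≤ detZ w5 w1) (fbB : 1 ≤ detZ w6 w2)
    (f1 : 1 ≤ detZ w6 w1 + detZ w1 w2 + detZ w2 w6)
    (f6 : 1 ≤ detZ w5 w6 + detZ w6 w1 + detZ w1 w5)
    (f4 : 1 ≤ detZ w3 w4 + detZ w4 w5 + detZ w5 w3) : False := by
  have dexp := det_expand h12
  set X4 := detZ w4 w2 with hX4d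
  set X5 := detZ w5 w2 with hX5d
  set X6 := detZ w6 w2 with hX6d
  set Y3 := detZ w1 w3 with hY3d
  set Y4 := detZ w1 w4 with hY4d
  set Y5 := detZ w1 w5 with hY5d
  set Y6 := detZ w1 w6 with hY6d
  have hX3 : detZ w3 w2 = -1 := by
    have h := dexp w2 w3; rw [h23, detZ_self, h12] at h; linarith
  have hb2 : Y3 ≤ 0 := bad2
  have hb3 : 0 ≤ X4 := by
    have h := dexp w2 w4; rw [detZ_self, h12] at h; linarith
  have hY4 : Y4 ≤ 0 := hC1
  have hX5 : 0 ≤ X5 := by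
    have h := dexp w2 w5; rw [detZ_self, h12] at h; linarith
  have hY5 : Y5 ≤ -1 := by
    have h := dexp w5 w1; rw [detZ_self, h12] at h; linarith
  have hX6 : 1 ≤ X6 := fbB
  have hY6 : Y6 ≤ -2 := by
    have h := dexp w6 w1; rw [detZ_self, h12] at h; linarith
  have e61 : detZ w6 w1 = -Y6 := by
    have h := dexp w6 w1; rw [detZ_self, h12] at h; linarith
  have e26 : detZ w2 w6 = -X6 := by
    have h := dexp w2 w6; rw [detZ_self, h12] at h; linarith
  have e51 : detZ w5 w1 = -Y5 := by
    have h := dexp w5 w1; rw [detZ_self, h12] at h; linarith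
  have B1 : -Y4 - Y3 * X4 = 1 := by
    have h := dexp w3 w4; rw [h34, hX3] at h; linarith
  have B2 : X5 * Y6 - Y5 * X6 = 1 := by
    have h := dexp w5 w6; rw [h56] at h; linarith
  have C1 : X6 ≤ -Y6 := by rw [e61, h12, e26] at f1; linarith
  have C2 : Y6 ≤ Y5 := by rw [h56, e61] at f6; linarith
  have D45 : 2 ≤ X4 * Y5 - Y4 * X5 := by
    have h := dexp w4 w5; linarith
  have B3 : 0 ≤ X4 * Y5 - Y4 * X5 + X5 * Y3 + Y5 := by
    have h1 : detZ w4 w5 = X4 * Y5 - Y4 * X5 := dexp w4 w5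
    have h2 : detZ w5 w3 = X5 * Y3 + Y5 := by
      have h := dexp w5 w3; rw [hX3] at h; linarith
    rw [h34, h1, h2] at f4; linarith
  clear_value X4 X5 X6 Y3 Y4 Y5 Y6
  clear dexp f1 f6 f4 hX3 e61 e26 e51 h12 h23 h34 h45 h56 h61 bad2 bad3 hC1 hC2 fbA fbB
    hX4d hX5d hX6d hY3d hY4d hY5d hY6d
  rcases eq_or_lt_of_le hb2 with hY30 | hY3neg
  · -- Y3 = 0, so Y4 = -1
    have hY4m : Y4 = -1 := by nlinarith
    -- f4 consequence: X5 ≥ -Y5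
    have hX5ge : -Y5 ≤ X5 := by
      have h1 : 0 ≤ X4 * (-Y5) := mul_nonneg hb3 (by linarith)
      nlinarith
    -- B2 chain
    have k1 : (-Y5) * X6 = 1 + X5 * (-Y6) := by linear_combination B2
    have k2 : X5 * X6 ≤ X5 * (-Y6) := mul_le_mul_of_nonneg_left C1 hX5
    have k3 : 1 ≤ X6 * ((-Y5) - X5) := by nlinarith
    have k4 : X6 * ((-Y5) - X5) ≤ 0 := mul_nonpos_of_nonneg_of_nonpos (by linarith) (by linarith)
    linarith
  · have hY3 : Y3 ≤ -1 := by linarith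
    rcases eq_or_lt_of_le hb3 with hX40 | hX4pos
    · -- X4 = 0, so Y4 = -1
      have hY4m : Y4 = -1 := by nlinarith
      -- B3 : X5 + X5*Y3 + Y5 ≥ 0
      have h1 : X5 * Y3 ≤ 0 := mul_nonpos_of_nonneg_of_nonpos hX5 (by linarith)
      have h2 : X5 * (1 + Y3) ≤ 0 := mul_nonpos_of_nonneg_of_nonpos hX5 (by linarith)
      nlinarith
    · -- Y3 ≤ -1, X4 ≥ 1 : Y4 = 0 and contradiction with D45
      have hX41 : 1 ≤ X4 := hX4pos
      have h1 : Y3 * X4 ≤ -1 := by nlinarith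
      have hY40 : Y4 = 0 := by linarith
      have h2 : X4 * Y5 ≤ -1 := by nlinarith
      rw [hY40] at D45
      nlinarith

lemma exists_good (m : ℕ) (hm : 5 ≤ m) (v : ZMod m → ℤ × ℤ)
    (h : IsLDPFanData m v) (hs : numSingular m v = 2) :
    ∃ k : ZMod m, detZ (v (k - 1)) (v k) = 1 ∧ detZ (v k) (v (k + 1)) = 1 ∧
      detZ (v (k - 1)) (v (k + 1)) = 1 := by
  obtain ⟨⟨h3, hg, hdet, hcov, hdisj⟩, hfan⟩ := h
  have hf : ∀ i : ZMod m, 1 ≤ detZ (v (i - 1)) (v i) + detZ (v i) (v (i + 1)) +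
      detZ (v (i + 1)) (v (i - 1)) := hfan
  obtain ⟨p, q, hpq, hset⟩ := Set.ncard_eq_two.mp hs
  have hdet2p : 2 ≤ detZ (v p) (v (p + 1)) := by
    have hmem : p ∈ ({p, q} : Set (ZMod m)) := by simp
    rw [← hset] at hmem; exact hmem
  have hdet2q : 2 ≤ detZ (v q) (v (q + 1)) := by
    have hmem : q ∈ ({p, q} : Set (ZMod m)) := by simp
    rw [← hset] at hmem; exact hmem
  have hdet1 : ∀ j, j ≠ p → j ≠ q → detZ (v j) (v (j + 1)) = 1 := by
    intro j hj1 hj2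
    have hmem : j ∉ ({p, q} : Set (ZMod m)) := by simp [hj1, hj2]
    rw [← hset] at hmem
    simp only [Set.mem_setOf_eq, not_le] at hmem
    have := hdet j; omega
  by_contra hno
  push_neg at hno
  -- every smooth-interior vertex is bad
  have hbad : ∀ k : ZMod m, k - 1 ≠ p → k - 1 ≠ q → k ≠ p → k ≠ q →
      detZ (v (k - 1)) (v (k + 1)) ≤ 0 := by
    intro k h1 h2 h3' h4'
    have e1 : detZ (v (k - 1)) (v k) = 1 := by
      have := hdet1 (k - 1) h1 h2
      rw [show (k - 1) + 1 = k from by ring] at this; exact this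
    have e2 : detZ (v k) (v (k + 1)) = 1 := hdet1 k h3' h4'
    have hne := hno k e1 e2
    have hle : detZ (v (k + 1)) (v (k - 1)) = -detZ (v (k - 1)) (v (k + 1)) := by
      simp [detZ]; ring
    have := hf k
    rw [e1, e2] at this
    omega
  have no2 : ∀ k l : ZMod m, l - 1 ≠ k - 1 → l - 1 ≠ k → l ≠ k - 1 → l ≠ k →
      detZ (v (k - 1)) (v (k + 1)) ≤ 0 → detZ (v (l - 1)) (v (l + 1)) ≤ 0 → False :=
    fun k l d1 d2 d3 d4 => no_two_bad hg hdet hdisj hm k l d1 d2 d3 d4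
  -- m ≥ 7 is impossible
  have hbig : ¬ 7 ≤ m := by
    intro h7
    haveI : NeZero m := ⟨by omega⟩
    classical
    set F : Finset (ZMod m) := {p, p + 1, q, q + 1} with hF
    have hFcard : F.card ≤ 4 := by
      refine le_trans (Finset.card_insert_le _ _) (Nat.succ_le_succ ?_)
      refine le_trans (Finset.card_insert_le _ _) (Nat.succ_le_succ ?_)
      refine le_trans (Finset.card_insert_le _ _) (Nat.succ_le_succ ?_)
      simp
    have hcompl : 3 ≤ (Finset.univ \ F).card := by
      rw [Finset.card_sdiff_of_subset (Finset.subset_univ F), Finset.card_univ, ZMod.card]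
      omega
    have hSI : ∀ j : ZMod m, j ∈ Finset.univ \ F →
        (j - 1 ≠ p ∧ j - 1 ≠ q ∧ j ≠ p ∧ j ≠ q) := by
      intro j hj
      rw [Finset.mem_sdiff, hF] at hj
      simp only [Finset.mem_insert, Finset.mem_singleton, not_or] at hj
      obtain ⟨-, hj1, hj2, hj3, hj4⟩ := hj
      refine ⟨?_, ?_, hj1, hj3⟩
      · intro hc; exact hj2 (by linear_combination hc)
      · intro hc; exact hj4 (by linear_combination hc)
    obtain ⟨x, hx⟩ := Finset.card_pos.1 (by omega : 0 < (Finset.univ \ F).card)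
    obtain ⟨y, hy, hyx⟩ :=
      Finset.exists_mem_ne (s := Finset.univ \ F) (by omega) x
    have h2 : 1 < ((Finset.univ \ F).erase x).card := by
      rw [Finset.card_erase_of_mem hx]; omega
    obtain ⟨z, hz, hzy⟩ :=
      Finset.exists_mem_ne (s := (Finset.univ \ F).erase x) h2 y
    have hzx : z ≠ x := (Finset.mem_erase.1 hz).1
    have hz' : z ∈ Finset.univ \ F := (Finset.mem_erase.1 hz).2
    have rel : ∀ a b : ZMod m, a ∈ Finset.univ \ F → b ∈ Finset.univ \ F →
        b = a ∨ b = a + 1 ∨ b = a - 1 := by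
      intro a b ha hb
      obtain ⟨a1, a2, a3, a4⟩ := hSI a ha
      obtain ⟨b1, b2, b3, b4⟩ := hSI b hb
      by_contra hc; push_neg at hc
      obtain ⟨c1, c2, c3⟩ := hc
      refine no2 a b ?_ ?_ ?_ c1 (hbad a a1 a2 a3 a4) (hbad b b1 b2 b3 b4)
      · intro hcc; exact c1 (by linear_combination hcc)
      · intro hcc; exact c2 (by linear_combination hcc)
      · intro hcc; exact c3 (by linear_combination hcc)
    have h3ne : (3 : ZMod m) ≠ 0 := by
      intro hc
      have : ((3 : ℕ) : ZMod m) = 0 := by exact_mod_cast hc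
      rw [ZMod.natCast_eq_zero_iff] at this
      have := Nat.le_of_dvd (by norm_num) this
      omega
    have h2ne : (2 : ZMod m) ≠ 0 := by
      intro hc
      have : ((2 : ℕ) : ZMod m) = 0 := by exact_mod_cast hc
      rw [ZMod.natCast_eq_zero_iff] at this
      have := Nat.le_of_dvd (by norm_num) this
      omega
    have hy' : y ∈ Finset.univ \ F := hy
    rcases rel x y hx hy' with hxy | hxy | hxy
    · exact hyx hxy
    · rcases rel x z hx hz' with hxz | hxz | hxz
      · exact hzx hxz
      · exact hzy (hxz.trans hxy.symm)
      · rcases rel y z hy' hz' with hc | hc | hc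
        · exact hzy hc
        · rw [hxz, hxy] at hc; exact h3ne (by linear_combination -hc)
        · rw [hxy] at hc
          exact hzx (by rw [hc]; ring)
    · rcases rel x z hx hz' with hxz | hxz | hxz
      · exact hzx hxz
      · rcases rel y z hy' hz' with hc | hc | hc
        · exact hzy hc
        · rw [hxy] at hc
          exact hzx (by rw [hc]; ring)
        · rw [hxz, hxy] at hc; exact h3ne (by linear_combination hc)
      · exact hzy (hxz.trans hxy.symm)
  have hm56 : m = 5 ∨ m = 6 := by omega
  rcases hm56 with rfl | rfl
  · -- m = 5
    have c5 : (5 : ZMod 5) = 0 := by decide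
    have hqd := (by decide : ∀ a b : ZMod 5, a ≠ b →
      (b = a + 1 ∨ b = a + 2 ∨ b = a + 3 ∨ b = a + 4)) p q hpq
    rcases hqd with hq | hq | hq | hq <;> subst hq
    · -- r = 1 : case1, w = (v(p+2), v(p+3), v(p+4), v p, v(p+1))
      have h12 := hdet1 (p + 2) ((by decide : ∀ s : ZMod 5, s + 2 ≠ s) p) ((by decide : ∀ s : ZMod 5, s + 2 ≠ s + 1) p)
      rw [show p + 2 + 1 = p + 3 from by ring] at h12
      have h23 := hdet1 (p + 3) ((by decide : ∀ s : ZMod 5, s + 3 ≠ s) p) ((by decide : ∀ s : ZMod 5, s + 3 ≠ s + 1) p)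
      rw [show p + 3 + 1 = p + 4 from by ring] at h23
      have h34 := hdet1 (p + 4) ((by decide : ∀ s : ZMod 5, s + 4 ≠ s) p) ((by decide : ∀ s : ZMod 5, s + 4 ≠ s + 1) p)
      rw [show p + 4 + 1 = p from by linear_combination c5] at h34
      have h51 := hdet2q
      rw [show p + 1 + 1 = p + 2 from by ring] at h51
      have bad2 := hbad (p + 3) ((by decide : ∀ s : ZMod 5, s + 3 - 1 ≠ s) p) ((by decide : ∀ s : ZMod 5, s + 3 - 1 ≠ s + 1) p) ((by decide : ∀ s : ZMod 5, s + 3 ≠ s) p) ((by decide : ∀ s : ZMod 5, s + 3 ≠ s + 1) p)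
      rw [show p + 3 - 1 = p + 2 from by ring, show p + 3 + 1 = p + 4 from by ring] at bad2
      have bad3 := hbad (p + 4) ((by decide : ∀ s : ZMod 5, s + 4 - 1 ≠ s) p) ((by decide : ∀ s : ZMod 5, s + 4 - 1 ≠ s + 1) p) ((by decide : ∀ s : ZMod 5, s + 4 ≠ s) p) ((by decide : ∀ s : ZMod 5, s + 4 ≠ s + 1) p)
      rw [show p + 4 - 1 = p + 3 from by ring, show p + 4 + 1 = p from by linear_combination c5] at bad3
      have fb5 : 1 ≤ detZ (v (p)) (v (p + 2)) := by
        by_contra hcon; push_neg at hcon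
        refine no2 (p + 1) (p + 4) ((by decide : ∀ s : ZMod 5, s + 4 - 1 ≠ s + 1 - 1) p) ((by decide : ∀ s : ZMod 5, s + 4 - 1 ≠ s + 1) p) ((by decide : ∀ s : ZMod 5, s + 4 ≠ s + 1 - 1) p) ((by decide : ∀ s : ZMod 5, s + 4 ≠ s + 1) p) ?_ ?_
        · rw [show p + 1 - 1 = p from by ring, show p + 1 + 1 = p + 2 from by ring]; omega
        · rw [show p + 4 - 1 = p + 3 from by ring, show p + 4 + 1 = p from by linear_combination c5]
          exact bad3
      have fb1 : 1 ≤ detZ (v (p + 1)) (v (p + 3)) := by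
        by_contra hcon; push_neg at hcon
        refine no2 (p + 2) (p + 4) ((by decide : ∀ s : ZMod 5, s + 4 - 1 ≠ s + 2 - 1) p) ((by decide : ∀ s : ZMod 5, s + 4 - 1 ≠ s + 2) p) ((by decide : ∀ s : ZMod 5, s + 4 ≠ s + 2 - 1) p) ((by decide : ∀ s : ZMod 5, s + 4 ≠ s + 2) p) ?_ ?_
        · rw [show p + 2 - 1 = p + 1 from by ring, show p + 2 + 1 = p + 3 from by ring]; omega
        · rw [show p + 4 - 1 = p + 3 from by ring, show p + 4 + 1 = p from by linear_combination c5]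
          exact bad3
      have f1 := hf (p + 2)
      rw [show p + 2 - 1 = p + 1 from by ring, show p + 2 + 1 = p + 3 from by ring] at f1
      have f4 := hf (p)
      rw [show p - 1 = p + 4 from by linear_combination -c5, show p + 1 = p + 1 from by ring] at f4
      exact case1 h12 h23 h34 hdet2p h51 bad2 bad3 fb5 fb1 f1 f4 (hg (p+1))
    · -- r = 2 : case2, w = (v(p+3), v(p+4), v p, v(p+1), v(p+2))
      have h12 := hdet1 (p + 3) ((by decide : ∀ s : ZMod 5, s + 3 ≠ s) p) ((by decide : ∀ s : ZMod 5, s + 3 ≠ s + 2) p)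
      rw [show p + 3 + 1 = p + 4 from by ring] at h12
      have h23 := hdet1 (p + 4) ((by decide : ∀ s : ZMod 5, s + 4 ≠ s) p) ((by decide : ∀ s : ZMod 5, s + 4 ≠ s + 2) p)
      rw [show p + 4 + 1 = p from by linear_combination c5] at h23
      have h45 := hdet1 (p + 1) ((by decide : ∀ s : ZMod 5, s + 1 ≠ s) p) ((by decide : ∀ s : ZMod 5, s + 1 ≠ s + 2) p)
      rw [show p + 1 + 1 = p + 2 from by ring] at h45
      have h51 := hdet2q
      rw [show p + 2 + 1 = p + 3 from by ring] at h51
      have bad2 := hbad (p + 4) ((by decide : ∀ s : ZMod 5, s + 4 - 1 ≠ s) p) ((by decide : ∀ s : ZMod 5, s + 4 - 1 ≠ s + 2) p) ((by decide : ∀ s : ZMod 5, s + 4 ≠ s) p) ((by decide : ∀ s : ZMod 5, s + 4 ≠ s + 2) p)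
      rw [show p + 4 - 1 = p + 3 from by ring, show p + 4 + 1 = p from by linear_combination c5] at bad2
      have fbB : 1 ≤ detZ (v (p + 1)) (v (p + 3)) := by
        by_contra hcon; push_neg at hcon
        refine no2 (p + 2) (p + 4) ((by decide : ∀ s : ZMod 5, s + 4 - 1 ≠ s + 2 - 1) p) ((by decide : ∀ s : ZMod 5, s + 4 - 1 ≠ s + 2) p) ((by decide : ∀ s : ZMod 5, s + 4 ≠ s + 2 - 1) p) ((by decide : ∀ s : ZMod 5, s + 4 ≠ s + 2) p) ?_ ?_
        · rw [show p + 2 - 1 = p + 1 from by ring, show p + 2 + 1 = p + 3 from by ring]; omega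
        · rw [show p + 4 - 1 = p + 3 from by ring, show p + 4 + 1 = p from by linear_combination c5]
          exact bad2
      have f1 := hf (p + 3)
      rw [show p + 3 - 1 = p + 2 from by ring, show p + 3 + 1 = p + 4 from by ring] at f1
      have f4 := hf (p + 1)
      rw [show p + 1 - 1 = p from by ring, show p + 1 + 1 = p + 2 from by ring] at f4
      have f5 := hf (p + 2)
      rw [show p + 2 - 1 = p + 1 from by ring, show p + 2 + 1 = p + 3 from by ring] at f5
      exact case2 h12 h23 hdet2p h45 h51 bad2 fbB f1 f4 f5
    · -- r = 3 : case2, w = (v(p+1), v(p+2), v(p+3), v(p+4), v p)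
      have h12 := hdet1 (p + 1) ((by decide : ∀ s : ZMod 5, s + 1 ≠ s) p) ((by decide : ∀ s : ZMod 5, s + 1 ≠ s + 3) p)
      rw [show p + 1 + 1 = p + 2 from by ring] at h12
      have h23 := hdet1 (p + 2) ((by decide : ∀ s : ZMod 5, s + 2 ≠ s) p) ((by decide : ∀ s : ZMod 5, s + 2 ≠ s + 3) p)
      rw [show p + 2 + 1 = p + 3 from by ring] at h23
      have h45 := hdet1 (p + 4) ((by decide : ∀ s : ZMod 5, s + 4 ≠ s) p) ((by decide : ∀ s : ZMod 5, s + 4 ≠ s + 3) p)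
      rw [show p + 4 + 1 = p from by linear_combination c5] at h45
      have h34 := hdet2q
      rw [show p + 3 + 1 = p + 4 from by ring] at h34
      have bad2 := hbad (p + 2) ((by decide : ∀ s : ZMod 5, s + 2 - 1 ≠ s) p) ((by decide : ∀ s : ZMod 5, s + 2 - 1 ≠ s + 3) p) ((by decide : ∀ s : ZMod 5, s + 2 ≠ s) p) ((by decide : ∀ s : ZMod 5, s + 2 ≠ s + 3) p)
      rw [show p + 2 - 1 = p + 1 from by ring, show p + 2 + 1 = p + 3 from by ring] at bad2
      have fbB : 1 ≤ detZ (v (p + 4)) (v (p + 1)) := by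
        by_contra hcon; push_neg at hcon
        refine no2 (p) (p + 2) ((by decide : ∀ s : ZMod 5, s + 2 - 1 ≠ s - 1) p) ((by decide : ∀ s : ZMod 5, s + 2 - 1 ≠ s) p) ((by decide : ∀ s : ZMod 5, s + 2 ≠ s - 1) p) ((by decide : ∀ s : ZMod 5, s + 2 ≠ s) p) ?_ ?_
        · rw [show p - 1 = p + 4 from by linear_combination -c5, show p + 1 = p + 1 from by ring]; omega
        · rw [show p + 2 - 1 = p + 1 from by ring, show p + 2 + 1 = p + 3 from by ring]
          exact bad2
      have f1 := hf (p + 1)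
      rw [show p + 1 - 1 = p from by ring, show p + 1 + 1 = p + 2 from by ring] at f1
      have f4 := hf (p + 4)
      rw [show p + 4 - 1 = p + 3 from by ring, show p + 4 + 1 = p from by linear_combination c5] at f4
      have f5 := hf (p)
      rw [show p - 1 = p + 4 from by linear_combination -c5, show p + 1 = p + 1 from by ring] at f5
      exact case2 h12 h23 h34 h45 hdet2p bad2 fbB f1 f4 f5
    · -- r = 4 : case1, w = (v(p+1), v(p+2), v(p+3), v(p+4), v p)
      have h12 := hdet1 (p + 1) ((by decide : ∀ s : ZMod 5, s + 1 ≠ s) p) ((by decide : ∀ s : ZMod 5, s + 1 ≠ s + 4) p)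
      rw [show p + 1 + 1 = p + 2 from by ring] at h12
      have h23 := hdet1 (p + 2) ((by decide : ∀ s : ZMod 5, s + 2 ≠ s) p) ((by decide : ∀ s : ZMod 5, s + 2 ≠ s + 4) p)
      rw [show p + 2 + 1 = p + 3 from by ring] at h23
      have h34 := hdet1 (p + 3) ((by decide : ∀ s : ZMod 5, s + 3 ≠ s) p) ((by decide : ∀ s : ZMod 5, s + 3 ≠ s + 4) p)
      rw [show p + 3 + 1 = p + 4 from by ring] at h34
      have h45 := hdet2q
      rw [show p + 4 + 1 = p from by linear_combination c5] at h45
      have bad2 := hbad (p + 2) ((by decide : ∀ s : ZMod 5, s + 2 - 1 ≠ s) p) ((by decide : ∀ s : ZMod 5, s + 2 - 1 ≠ s + 4) p) ((by decide : ∀ s : ZMod 5, s + 2 ≠ s) p) ((by decide : ∀ s : ZMod 5, s + 2 ≠ s + 4) p)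
      rw [show p + 2 - 1 = p + 1 from by ring, show p + 2 + 1 = p + 3 from by ring] at bad2
      have bad3 := hbad (p + 3) ((by decide : ∀ s : ZMod 5, s + 3 - 1 ≠ s) p) ((by decide : ∀ s : ZMod 5, s + 3 - 1 ≠ s + 4) p) ((by decide : ∀ s : ZMod 5, s + 3 ≠ s) p) ((by decide : ∀ s : ZMod 5, s + 3 ≠ s + 4) p)
      rw [show p + 3 - 1 = p + 2 from by ring, show p + 3 + 1 = p + 4 from by ring] at bad3
      have fb5 : 1 ≤ detZ (v (p + 4)) (v (p + 1)) := by
        by_contra hcon; push_neg at hcon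
        refine no2 (p) (p + 2) ((by decide : ∀ s : ZMod 5, s + 2 - 1 ≠ s - 1) p) ((by decide : ∀ s : ZMod 5, s + 2 - 1 ≠ s) p) ((by decide : ∀ s : ZMod 5, s + 2 ≠ s - 1) p) ((by decide : ∀ s : ZMod 5, s + 2 ≠ s) p) ?_ ?_
        · rw [show p - 1 = p + 4 from by linear_combination -c5, show p + 1 = p + 1 from by ring]; omega
        · rw [show p + 2 - 1 = p + 1 from by ring, show p + 2 + 1 = p + 3 from by ring]
          exact bad2
      have fb1 : 1 ≤ detZ (v (p)) (v (p + 2)) := by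
        by_contra hcon; push_neg at hcon
        refine no2 (p + 1) (p + 3) ((by decide : ∀ s : ZMod 5, s + 3 - 1 ≠ s + 1 - 1) p) ((by decide : ∀ s : ZMod 5, s + 3 - 1 ≠ s + 1) p) ((by decide : ∀ s : ZMod 5, s + 3 ≠ s + 1 - 1) p) ((by decide : ∀ s : ZMod 5, s + 3 ≠ s + 1) p) ?_ ?_
        · rw [show p + 1 - 1 = p from by ring, show p + 1 + 1 = p + 2 from by ring]; omega
        · rw [show p + 3 - 1 = p + 2 from by ring, show p + 3 + 1 = p + 4 from by ring]
          exact bad3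
      have f1 := hf (p + 1)
      rw [show p + 1 - 1 = p from by ring, show p + 1 + 1 = p + 2 from by ring] at f1
      have f4 := hf (p + 4)
      rw [show p + 4 - 1 = p + 3 from by ring, show p + 4 + 1 = p from by linear_combination c5] at f4
      exact case1 h12 h23 h34 h45 hdet2p bad2 bad3 fb5 fb1 f1 f4 (hg p)
  · -- m = 6
    have c6 : (6 : ZMod 6) = 0 := by decide
    have hqd := (by decide : ∀ a b : ZMod 6, a ≠ b →
      (b = a + 1 ∨ b = a + 2 ∨ b = a + 3 ∨ b = a + 4 ∨ b = a + 5)) p q hpq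
    rcases hqd with hq | hq | hq | hq | hq <;> subst hq
    · -- r = 1 : three consecutive SI vertices, far pair
      exact no2 (p + 3) (p + 5) ((by decide : ∀ s : ZMod 6, s + 5 - 1 ≠ s + 3 - 1) p) ((by decide : ∀ s : ZMod 6, s + 5 - 1 ≠ s + 3) p) ((by decide : ∀ s : ZMod 6, s + 5 ≠ s + 3 - 1) p) ((by decide : ∀ s : ZMod 6, s + 5 ≠ s + 3) p)
        (hbad (p + 3) ((by decide : ∀ s : ZMod 6, s + 3 - 1 ≠ s) p) ((by decide : ∀ s : ZMod 6, s + 3 - 1 ≠ s + 1) p) ((by decide : ∀ s : ZMod 6, s + 3 ≠ s) p) ((by decide : ∀ s : ZMod 6, s + 3 ≠ s + 1) p))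
        (hbad (p + 5) ((by decide : ∀ s : ZMod 6, s + 5 - 1 ≠ s) p) ((by decide : ∀ s : ZMod 6, s + 5 - 1 ≠ s + 1) p) ((by decide : ∀ s : ZMod 6, s + 5 ≠ s) p) ((by decide : ∀ s : ZMod 6, s + 5 ≠ s + 1) p))
    · -- r = 2 : case3
      have h12 := hdet1 (p + 3) ((by decide : ∀ s : ZMod 6, s + 3 ≠ s) p) ((by decide : ∀ s : ZMod 6, s + 3 ≠ s + 2) p)
      rw [show p + 3 + 1 = p + 4 from by ring] at h12
      have h23 := hdet1 (p + 4) ((by decide : ∀ s : ZMod 6, s + 4 ≠ s) p) ((by decide : ∀ s : ZMod 6, s + 4 ≠ s + 2) p)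
      rw [show p + 4 + 1 = p + 5 from by ring] at h23
      have h34 := hdet1 (p + 5) ((by decide : ∀ s : ZMod 6, s + 5 ≠ s) p) ((by decide : ∀ s : ZMod 6, s + 5 ≠ s + 2) p)
      rw [show p + 5 + 1 = p from by linear_combination c6] at h34
      have h56 := hdet1 (p + 1) ((by decide : ∀ s : ZMod 6, s + 1 ≠ s) p) ((by decide : ∀ s : ZMod 6, s + 1 ≠ s + 2) p)
      rw [show p + 1 + 1 = p + 2 from by ring] at h56
      have h61 := hdet2q
      rw [show p + 2 + 1 = p + 3 from by ring] at h61
      have bad2 := hbad (p + 4) ((by decide : ∀ s : ZMod 6, s + 4 - 1 ≠ s) p) ((by decide : ∀ s : ZMod 6, s + 4 - 1 ≠ s + 2) p) ((by decide : ∀ s : ZMod 6, s + 4 ≠ s) p) ((by decide : ∀ s : ZMod 6, s + 4 ≠ s + 2) p)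
      rw [show p + 4 - 1 = p + 3 from by ring, show p + 4 + 1 = p + 5 from by ring] at bad2
      have bad3 := hbad (p + 5) ((by decide : ∀ s : ZMod 6, s + 5 - 1 ≠ s) p) ((by decide : ∀ s : ZMod 6, s + 5 - 1 ≠ s + 2) p) ((by decide : ∀ s : ZMod 6, s + 5 ≠ s) p) ((by decide : ∀ s : ZMod 6, s + 5 ≠ s + 2) p)
      rw [show p + 5 - 1 = p + 4 from by ring, show p + 5 + 1 = p from by linear_combination c6] at bad3
      have hC1 := (bad_pushes hg hdet hdisj (p + 4) (p + 5) ((by decide : ∀ s : ZMod 6, s + 5 ≠ s + 4 - 1) p) ((by decide : ∀ s : ZMod 6, s + 5 ≠ s + 4) p)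
        (by rw [show p + 4 - 1 = p + 3 from by ring, show p + 4 + 1 = p + 5 from by ring]; exact bad2)).2
      rw [show p + 4 - 1 = p + 3 from by ring, show p + 5 + 1 = p from by linear_combination c6] at hC1
      have hC2 := (bad_pushes hg hdet hdisj (p + 5) (p) ((by decide : ∀ s : ZMod 6, s ≠ s + 5 - 1) p) ((by decide : ∀ s : ZMod 6, s ≠ s + 5) p)
        (by rw [show p + 5 - 1 = p + 4 from by ring, show p + 5 + 1 = p from by linear_combination c6]; exact bad3)).2
      rw [show p + 5 - 1 = p + 4 from by ring, show p + 1 = p + 1 from by ring] at hC2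
      have fbA : 1 ≤ detZ (v (p + 1)) (v (p + 3)) := by
        by_contra hcon; push_neg at hcon
        refine no2 (p + 2) (p + 4) ((by decide : ∀ s : ZMod 6, s + 4 - 1 ≠ s + 2 - 1) p) ((by decide : ∀ s : ZMod 6, s + 4 - 1 ≠ s + 2) p) ((by decide : ∀ s : ZMod 6, s + 4 ≠ s + 2 - 1) p) ((by decide : ∀ s : ZMod 6, s + 4 ≠ s + 2) p) ?_ ?_
        · rw [show p + 2 - 1 = p + 1 from by ring, show p + 2 + 1 = p + 3 from by ring]; omega
        · rw [show p + 4 - 1 = p + 3 from by ring, show p + 4 + 1 = p + 5 from by ring]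
          exact bad2
      have fbB : 1 ≤ detZ (v (p + 2)) (v (p + 4)) := by
        by_contra hcon; push_neg at hcon
        refine no2 (p + 3) (p + 5) ((by decide : ∀ s : ZMod 6, s + 5 - 1 ≠ s + 3 - 1) p) ((by decide : ∀ s : ZMod 6, s + 5 - 1 ≠ s + 3) p) ((by decide : ∀ s : ZMod 6, s + 5 ≠ s + 3 - 1) p) ((by decide : ∀ s : ZMod 6, s + 5 ≠ s + 3) p) ?_ ?_
        · rw [show p + 3 - 1 = p + 2 from by ring, show p + 3 + 1 = p + 4 from by ring]; omega
        · rw [show p + 5 - 1 = p + 4 from by ring, show p + 5 + 1 = p from by linear_combination c6]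
          exact bad3
      have f1 := hf (p + 3)
      rw [show p + 3 - 1 = p + 2 from by ring, show p + 3 + 1 = p + 4 from by ring] at f1
      have f6 := hf (p + 2)
      rw [show p + 2 - 1 = p + 1 from by ring, show p + 2 + 1 = p + 3 from by ring] at f6
      have f4 := hf (p)
      rw [show p - 1 = p + 5 from by linear_combination -c6, show p + 1 = p + 1 from by ring] at f4
      exact case3 h12 h23 h34 hdet2p h56 h61 bad2 bad3 hC1 hC2 fbA fbB f1 f6 f4
    · -- r = 3 : far pair
      exact no2 (p + 2) (p + 5) ((by decide : ∀ s : ZMod 6, s + 5 - 1 ≠ s + 2 - 1) p) ((by decide : ∀ s : ZMod 6, s + 5 - 1 ≠ s + 2) p) ((by decide : ∀ s : ZMod 6, s + 5 ≠ s + 2 - 1) p) ((by decide : ∀ s : ZMod 6, s + 5 ≠ s + 2) p)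
        (hbad (p + 2) ((by decide : ∀ s : ZMod 6, s + 2 - 1 ≠ s) p) ((by decide : ∀ s : ZMod 6, s + 2 - 1 ≠ s + 3) p) ((by decide : ∀ s : ZMod 6, s + 2 ≠ s) p) ((by decide : ∀ s : ZMod 6, s + 2 ≠ s + 3) p))
        (hbad (p + 5) ((by decide : ∀ s : ZMod 6, s + 5 - 1 ≠ s) p) ((by decide : ∀ s : ZMod 6, s + 5 - 1 ≠ s + 3) p) ((by decide : ∀ s : ZMod 6, s + 5 ≠ s) p) ((by decide : ∀ s : ZMod 6, s + 5 ≠ s + 3) p))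
    · -- r = 4 : case3
      have h12 := hdet1 (p + 1) ((by decide : ∀ s : ZMod 6, s + 1 ≠ s) p) ((by decide : ∀ s : ZMod 6, s + 1 ≠ s + 4) p)
      rw [show p + 1 + 1 = p + 2 from by ring] at h12
      have h23 := hdet1 (p + 2) ((by decide : ∀ s : ZMod 6, s + 2 ≠ s) p) ((by decide : ∀ s : ZMod 6, s + 2 ≠ s + 4) p)
      rw [show p + 2 + 1 = p + 3 from by ring] at h23
      have h34 := hdet1 (p + 3) ((by decide : ∀ s : ZMod 6, s + 3 ≠ s) p) ((by decide : ∀ s : ZMod 6, s + 3 ≠ s + 4) p)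
      rw [show p + 3 + 1 = p + 4 from by ring] at h34
      have h56 := hdet1 (p + 5) ((by decide : ∀ s : ZMod 6, s + 5 ≠ s) p) ((by decide : ∀ s : ZMod 6, s + 5 ≠ s + 4) p)
      rw [show p + 5 + 1 = p from by linear_combination c6] at h56
      have h45 := hdet2q
      rw [show p + 4 + 1 = p + 5 from by ring] at h45
      have bad2 := hbad (p + 2) ((by decide : ∀ s : ZMod 6, s + 2 - 1 ≠ s) p) ((by decide : ∀ s : ZMod 6, s + 2 - 1 ≠ s + 4) p) ((by decide : ∀ s : ZMod 6, s + 2 ≠ s) p) ((by decide : ∀ s : ZMod 6, s + 2 ≠ s + 4) p)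
      rw [show p + 2 - 1 = p + 1 from by ring, show p + 2 + 1 = p + 3 from by ring] at bad2
      have bad3 := hbad (p + 3) ((by decide : ∀ s : ZMod 6, s + 3 - 1 ≠ s) p) ((by decide : ∀ s : ZMod 6, s + 3 - 1 ≠ s + 4) p) ((by decide : ∀ s : ZMod 6, s + 3 ≠ s) p) ((by decide : ∀ s : ZMod 6, s + 3 ≠ s + 4) p)
      rw [show p + 3 - 1 = p + 2 from by ring, show p + 3 + 1 = p + 4 from by ring] at bad3
      have hC1 := (bad_pushes hg hdet hdisj (p + 2) (p + 3) ((by decide : ∀ s : ZMod 6, s + 3 ≠ s + 2 - 1) p) ((by decide : ∀ s : ZMod 6, s + 3 ≠ s + 2) p)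
        (by rw [show p + 2 - 1 = p + 1 from by ring, show p + 2 + 1 = p + 3 from by ring]; exact bad2)).2
      rw [show p + 2 - 1 = p + 1 from by ring, show p + 3 + 1 = p + 4 from by ring] at hC1
      have hC2 := (bad_pushes hg hdet hdisj (p + 3) (p + 4) ((by decide : ∀ s : ZMod 6, s + 4 ≠ s + 3 - 1) p) ((by decide : ∀ s : ZMod 6, s + 4 ≠ s + 3) p)
        (by rw [show p + 3 - 1 = p + 2 from by ring, show p + 3 + 1 = p + 4 from by ring]; exact bad3)).2
      rw [show p + 3 - 1 = p + 2 from by ring, show p + 4 + 1 = p + 5 from by ring] at hC2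
      have fbA : 1 ≤ detZ (v (p + 5)) (v (p + 1)) := by
        by_contra hcon; push_neg at hcon
        refine no2 (p) (p + 2) ((by decide : ∀ s : ZMod 6, s + 2 - 1 ≠ s - 1) p) ((by decide : ∀ s : ZMod 6, s + 2 - 1 ≠ s) p) ((by decide : ∀ s : ZMod 6, s + 2 ≠ s - 1) p) ((by decide : ∀ s : ZMod 6, s + 2 ≠ s) p) ?_ ?_
        · rw [show p - 1 = p + 5 from by linear_combination -c6, show p + 1 = p + 1 from by ring]; omega
        · rw [show p + 2 - 1 = p + 1 from by ring, show p + 2 + 1 = p + 3 from by ring]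
          exact bad2
      have fbB : 1 ≤ detZ (v (p)) (v (p + 2)) := by
        by_contra hcon; push_neg at hcon
        refine no2 (p + 1) (p + 3) ((by decide : ∀ s : ZMod 6, s + 3 - 1 ≠ s + 1 - 1) p) ((by decide : ∀ s : ZMod 6, s + 3 - 1 ≠ s + 1) p) ((by decide : ∀ s : ZMod 6, s + 3 ≠ s + 1 - 1) p) ((by decide : ∀ s : ZMod 6, s + 3 ≠ s + 1) p) ?_ ?_
        · rw [show p + 1 - 1 = p from by ring, show p + 1 + 1 = p + 2 from by ring]; omega
        · rw [show p + 3 - 1 = p + 2 from by ring, show p + 3 + 1 = p + 4 from by ring]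
          exact bad3
      have f1 := hf (p + 1)
      rw [show p + 1 - 1 = p from by ring, show p + 1 + 1 = p + 2 from by ring] at f1
      have f6 := hf (p)
      rw [show p - 1 = p + 5 from by linear_combination -c6, show p + 1 = p + 1 from by ring] at f6
      have f4 := hf (p + 4)
      rw [show p + 4 - 1 = p + 3 from by ring, show p + 4 + 1 = p + 5 from by ring] at f4
      exact case3 h12 h23 h34 h45 h56 hdet2p bad2 bad3 hC1 hC2 fbA fbB f1 f6 f4
    · -- r = 5 : far pair
      exact no2 (p + 2) (p + 4) ((by decide : ∀ s : ZMod 6, s + 4 - 1 ≠ s + 2 - 1) p) ((by decide : ∀ s : ZMod 6, s + 4 - 1 ≠ s + 2) p) ((by decide : ∀ s : ZMod 6, s + 4 ≠ s + 2 - 1) p) ((by decide : ∀ s : ZMod 6, s + 4 ≠ s + 2) p)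
        (hbad (p + 2) ((by decide : ∀ s : ZMod 6, s + 2 - 1 ≠ s) p) ((by decide : ∀ s : ZMod 6, s + 2 - 1 ≠ s + 5) p) ((by decide : ∀ s : ZMod 6, s + 2 ≠ s) p) ((by decide : ∀ s : ZMod 6, s + 2 ≠ s + 5) p))
        (hbad (p + 4) ((by decide : ∀ s : ZMod 6, s + 4 - 1 ≠ s) p) ((by decide : ∀ s : ZMod 6, s + 4 - 1 ≠ s + 5) p) ((by decide : ∀ s : ZMod 6, s + 4 ≠ s) p) ((by decide : ∀ s : ZMod 6, s + 4 ≠ s + 5) p))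


lemma merged_disj {m : ℕ} {v : ZMod m → ℤ × ℤ}
    (hg : ∀ i, Int.gcd (v i).1 (v i).2 = 1)
    (hdet : ∀ i, 1 ≤ detZ (v i) (v (i + 1)))
    (hdisj : ∀ i j, i ≠ j → interior (coneOf (v i) (v (i + 1))) ∩
      interior (coneOf (v j) (v (j + 1))) = ∅)
    (k j : ZMod m) (hj1 : j ≠ k - 1) (hj2 : j ≠ k)
    (hsum : v k = v (k - 1) + v (k + 1)) :
    interior (coneOf (v (k - 1)) (v (k + 1))) ∩
      interior (coneOf (v j) (v (j + 1))) = ∅ := by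
  by_contra hc
  have hne : (interior (coneOf (v (k - 1)) (v (k + 1))) ∩
      interior (coneOf (v j) (v (j + 1)))).Nonempty := Set.nonempty_iff_ne_empty.2 hc
  obtain ⟨y, hyU, hyl⟩ := exists_avoid [v (k - 1), v k, v (k + 1)]
    (by intro z hz; simp at hz; rcases hz with rfl | rfl | rfl <;> exact prim_ne_zero (hg _))
    _ (isOpen_interior.inter isOpen_interior) hne
  have hk1 : (k - 1) + 1 = k := by ring
  have hdk1 : 0 < detZ (v (k - 1)) (v k) := by
    have := hdet (k - 1); rw [hk1] at this; omega
  have hdk : 0 < detZ (v k) (v (k + 1)) := by have := hdet k; omega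
  have hy1 : y ∈ coneOf (v (k - 1)) (v (k + 1)) := interior_subset hyU.1
  rw [coneOf_union hsum] at hy1
  have havk1 : detR (toR2 (v (k - 1))) y ≠ 0 := hyl _ (by simp)
  have havk : detR (toR2 (v k)) y ≠ 0 := hyl _ (by simp)
  have havk2 : detR (toR2 (v (k + 1))) y ≠ 0 := hyl _ (by simp)
  have havk' : detR y (toR2 (v k)) ≠ 0 := by
    rw [detR_anti]; exact neg_ne_zero.2 havk
  have havk2' : detR y (toR2 (v (k + 1))) ≠ 0 := by
    rw [detR_anti]; exact neg_ne_zero.2 havk2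
  rcases hy1 with hc1 | hc1
  · have hmc := (mem_coneOf_iff hdk1 y).1 hc1
    have hstrict : y ∈ interior (coneOf (v (k - 1)) (v ((k - 1) + 1))) := by
      rw [hk1]
      exact strict_subset_interior hdk1
        ⟨hmc.1.lt_of_ne (Ne.symm havk1), hmc.2.lt_of_ne (Ne.symm havk')⟩
    have hd := hdisj (k - 1) j (fun h => hj1 h.symm)
    exact (hd ▸ Set.mem_inter hstrict hyU.2 : y ∈ (∅ : Set (ℝ × ℝ)))
  · have hmc := (mem_coneOf_iff hdk y).1 hc1
    have hstrict : y ∈ interior (coneOf (v k) (v (k + 1))) :=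
      strict_subset_interior hdk
        ⟨hmc.1.lt_of_ne (Ne.symm havk), hmc.2.lt_of_ne (Ne.symm havk2')⟩
    have hd := hdisj k j (fun h => hj2 h.symm)
    exact (hd ▸ Set.mem_inter hstrict hyU.2 : y ∈ (∅ : Set (ℝ × ℝ)))

lemma delete_keeps {m : ℕ} (hm : 5 ≤ m) (v : ZMod m → ℤ × ℤ)
    (h : IsLDPFanData m v) (hs : numSingular m v = 2) (k : ZMod m)
    (h1 : detZ (v (k - 1)) (v k) = 1) (h2 : detZ (v k) (v (k + 1)) = 1)
    (h3 : detZ (v (k - 1)) (v (k + 1)) = 1) :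
    IsLDPFanData (m - 1) (deleteAt v k) ∧ numSingular (m - 1) (deleteAt v k) = 2 := by
  obtain ⟨⟨h3m, hg, hdet, hcov, hdisj⟩, hfan⟩ := h
  haveI : NeZero m := ⟨by omega⟩
  haveI : NeZero (m - 1) := ⟨by omega⟩
  haveI : Fact (1 < m - 1) := ⟨by omega⟩
  have hk1 : (k - 1) + 1 = k := by ring
  have hsum : v k = v (k - 1) + v (k + 1) := eq_sum_of_dets h1 h2 h3
  have hfanE : ∀ i : ZMod m, 1 ≤ detZ (v (i - 1)) (v i) + detZ (v i) (v (i + 1)) +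
      detZ (v (i + 1)) (v (i - 1)) := hfan
  set w := deleteAt v k with hwdef
  have wdef : ∀ i : ZMod (m - 1), w i = v (k + 1 + (i.val : ZMod m)) := fun i => rfl
  have hval1 : (1 : ZMod (m - 1)).val = 1 := ZMod.val_one (m - 1)
  have hsucc : ∀ i : ZMod (m - 1), i.val + 1 < m - 1 → (i + 1).val = i.val + 1 := by
    intro i hi
    rw [ZMod.val_add, hval1, Nat.mod_eq_of_lt hi]
  have hlastv : ∀ i : ZMod (m - 1), i.val = m - 2 → (i + 1).val = 0 := by
    intro i hi
    rw [ZMod.val_add, hval1, hi, show m - 2 + 1 = m - 1 from by omega, Nat.mod_self]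
  have castm1 : ((m - 1 : ℕ) : ZMod m) = -1 := by
    rw [Nat.cast_sub (by omega : 1 ≤ m), ZMod.natCast_self]; push_cast; ring
  have castm2 : ((m - 2 : ℕ) : ZMod m) = -2 := by
    rw [Nat.cast_sub (by omega : 2 ≤ m), ZMod.natCast_self]; push_cast; ring
  have castm3 : ((m - 3 : ℕ) : ZMod m) = -3 := by
    rw [Nat.cast_sub (by omega : 3 ≤ m), ZMod.natCast_self]; push_cast; ring
  have wlt : ∀ i : ZMod (m - 1), i.val < m - 2 → w (i + 1) = v (k + 1 + (i.val : ZMod m) + 1) := by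
    intro i hi
    rw [wdef, hsucc i (by omega)]
    congr 1
    push_cast
    ring
  have wlast1 : ∀ i : ZMod (m - 1), i.val = m - 2 → w i = v (k - 1) := by
    intro i hi
    rw [wdef, hi, castm2]
    congr 1; ring
  have wlast2 : ∀ i : ZMod (m - 1), i.val = m - 2 → w (i + 1) = v (k + 1) := by
    intro i hi
    rw [wdef, hlastv i hi]
    congr 1
    push_cast
    ring
  have tlt : ∀ j : ZMod m, j ≠ k - 1 → j ≠ k → (j - k - 1).val < m - 2 := by
    intro j hj1 hj2
    have hv := ZMod.val_lt (j - k - 1)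
    have hrec : (((j - k - 1).val : ℕ) : ZMod m) = j - k - 1 :=
      ZMod.natCast_rightInverse _
    by_contra hc
    push_neg at hc
    have hor : (j - k - 1).val = m - 2 ∨ (j - k - 1).val = m - 1 := by omega
    rcases hor with he | he
    · apply hj1
      have : j - k - 1 = -2 := by rw [← hrec, he, castm2]
      linear_combination this
    · apply hj2
      have : j - k - 1 = -1 := by rw [← hrec, he, castm1]
      linear_combination this
  have slot : ∀ j : ZMod m, j ≠ k - 1 → j ≠ k →
      ∃ i : ZMod (m - 1), i.val < m - 2 ∧ w i = v j ∧ w (i + 1) = v (j + 1) := by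
    intro j hj1 hj2
    have htl := tlt j hj1 hj2
    refine ⟨(((j - k - 1).val : ℕ) : ZMod (m - 1)), ?_, ?_, ?_⟩
    · rw [ZMod.val_cast_of_lt (by omega : (j - k - 1).val < m - 1)]
      exact htl
    · rw [wdef, ZMod.val_cast_of_lt (by omega : (j - k - 1).val < m - 1),
        ZMod.natCast_rightInverse _]
      congr 1; ring
    · rw [wlt _ (by rw [ZMod.val_cast_of_lt (by omega : (j - k - 1).val < m - 1)]; exact htl),
        ZMod.val_cast_of_lt (by omega : (j - k - 1).val < m - 1),
        ZMod.natCast_rightInverse _]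
      congr 1; ring
  -- determinant values of the new fan
  have detlt : ∀ i : ZMod (m - 1), i.val < m - 2 →
      detZ (w i) (w (i + 1)) = detZ (v (k + 1 + (i.val : ZMod m)))
        (v (k + 1 + (i.val : ZMod m) + 1)) := by
    intro i hi
    rw [wdef i, wlt i hi]
  have detlast : ∀ i : ZMod (m - 1), i.val = m - 2 → detZ (w i) (w (i + 1)) = 1 := by
    intro i hi
    rw [wlast1 i hi, wlast2 i hi]; exact h3
  have hwdet : ∀ i : ZMod (m - 1), 1 ≤ detZ (w i) (w (i + 1)) := by
    intro i
    have hv := ZMod.val_lt i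
    rcases lt_or_eq_of_le (by omega : i.val ≤ m - 2) with hi | hi
    · rw [detlt i hi]; exact hdet _
    · rw [detlast i hi]
  -- covering
  have hwcov : (⋃ i, coneOf (w i) (w (i + 1))) = Set.univ := by
    apply Set.eq_univ_of_univ_subset
    rw [← hcov]
    apply Set.iUnion_subset
    intro j
    by_cases hj : j = k - 1 ∨ j = k
    · set ilast : ZMod (m - 1) := ((m - 2 : ℕ) : ZMod (m - 1)) with hil
      have hilv : ilast.val = m - 2 := ZMod.val_cast_of_lt (by omega)
      have hmerge : coneOf (w ilast) (w (ilast + 1)) =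
          coneOf (v (k - 1)) (v k) ∪ coneOf (v k) (v (k + 1)) := by
        rw [wlast1 ilast hilv, wlast2 ilast hilv]
        exact coneOf_union hsum
      apply Set.subset_iUnion_of_subset ilast
      rw [hmerge]
      rcases hj with rfl | rfl
      · rw [hk1]; exact Set.subset_union_left
      · exact Set.subset_union_right
    · push_neg at hj
      obtain ⟨i, _, hwi, hwi1⟩ := slot j hj.1 hj.2
      apply Set.subset_iUnion_of_subset i
      rw [hwi, hwi1]
  -- index injectivity helpers
  have castinj : ∀ s t : ℕ, s < m → t < m → ((s : ZMod m) = (t : ZMod m)) → s = t := by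
    intro s t hs ht hh
    have := congrArg ZMod.val hh
    rwa [ZMod.val_cast_of_lt hs, ZMod.val_cast_of_lt ht] at this
  have jne : ∀ i : ZMod (m - 1), i.val < m - 2 →
      (k + 1 + (i.val : ZMod m) ≠ k - 1 ∧ k + 1 + (i.val : ZMod m) ≠ k) := by
    intro i hi
    constructor
    · intro hcc
      have : ((i.val : ℕ) : ZMod m) = ((m - 2 : ℕ) : ZMod m) := by
        rw [castm2]; linear_combination hcc
      have := castinj _ _ (by omega) (by omega) this
      omega
    · intro hcc
      have : ((i.val : ℕ) : ZMod m) = ((m - 1 : ℕ) : ZMod m) := by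
        rw [castm1]; linear_combination hcc
      have := castinj _ _ (by omega) (by omega) this
      omega
  -- disjointness
  have hwdisj : ∀ a b : ZMod (m - 1), a ≠ b →
      interior (coneOf (w a) (w (a + 1))) ∩ interior (coneOf (w b) (w (b + 1))) = ∅ := by
    intro a b hab
    have hva := ZMod.val_lt a
    have hvb := ZMod.val_lt b
    rcases lt_or_eq_of_le (by omega : a.val ≤ m - 2) with ha | ha <;>
      rcases lt_or_eq_of_le (by omega : b.val ≤ m - 2) with hb | hb
    · rw [wdef a, wlt a ha, wdef b, wlt b hb]
      apply hdisj
      intro hcc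
      apply hab
      have : ((a.val : ℕ) : ZMod m) = ((b.val : ℕ) : ZMod m) := by linear_combination hcc
      exact ZMod.val_injective _ (castinj _ _ (by omega) (by omega) this)
    · rw [wdef a, wlt a ha, wlast1 b hb, wlast2 b hb, Set.inter_comm]
      exact merged_disj hg hdet hdisj k _ (jne a ha).1 (jne a ha).2 hsum
    · rw [wdef b, wlt b hb, wlast1 a ha, wlast2 a ha]
      exact merged_disj hg hdet hdisj k _ (jne b hb).1 (jne b hb).2 hsum
    · exact absurd (ZMod.val_injective _ (ha.trans hb.symm)) hab
  -- the LDP condition for the new fan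
  have detZ_add_left : ∀ x y z : ℤ × ℤ, detZ (x + y) z = detZ x z + detZ y z := by
    intro x y z; simp [detZ, Prod.fst_add, Prod.snd_add]; ring
  have detZ_add_right : ∀ z x y : ℤ × ℤ, detZ z (x + y) = detZ z x + detZ z y := by
    intro z x y; simp [detZ, Prod.fst_add, Prod.snd_add]; ring
  have G : ∀ jj : ZMod (m - 1), 1 ≤ detZ (w jj) (w (jj + 1)) +
      detZ (w (jj + 1)) (w (jj + 1 + 1)) + detZ (w (jj + 1 + 1)) (w jj) := by
    intro jj
    have hv := ZMod.val_lt jj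
    have h3or : jj.val < m - 3 ∨ jj.val = m - 3 ∨ jj.val = m - 2 := by omega
    rcases h3or with ht | ht | ht
    · -- generic case
      have hsv : (jj + 1).val = jj.val + 1 := hsucc jj (by omega)
      have e1 : w jj = v (k + 1 + (jj.val : ZMod m)) := wdef jj
      have e2 : w (jj + 1) = v (k + 1 + (jj.val : ZMod m) + 1) := wlt jj (by omega)
      have e3 : w (jj + 1 + 1) = v (k + 1 + (jj.val : ZMod m) + 1 + 1) := by
        rw [wlt (jj + 1) (by omega : (jj + 1).val < m - 2), hsv]
        congr 1
        push_cast
        ring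
      rw [e1, e2, e3]
      have hff := hfanE (k + 1 + (jj.val : ZMod m) + 1)
      rw [show k + 1 + (jj.val : ZMod m) + 1 - 1 = k + 1 + (jj.val : ZMod m) from by ring]
        at hff
      exact hff
    · -- jj at position m-3 : triple (v (k-2), v (k-1), v (k+1))
      have hsv : (jj + 1).val = m - 2 := by rw [hsucc jj (by omega), ht]; omega
      have e1 : w jj = v (k - 2) := by
        rw [wdef jj, ht, castm3]
        congr 1; ring
      have e2 : w (jj + 1) = v (k - 1) := wlast1 _ hsv
      have e3 : w (jj + 1 + 1) = v (k + 1) := wlast2 _ hsv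
      rw [e1, e2, e3]
      have hff := hfanE (k - 1)
      rw [show k - 1 - 1 = k - 2 from by ring, hk1, h1, hsum, detZ_add_left] at hff
      have hE : 1 ≤ detZ (v (k - 2)) (v (k - 1)) := by
        have := hdet (k - 2)
        rw [show k - 2 + 1 = k - 1 from by ring] at this
        exact this
      have hEanti : detZ (v (k - 1)) (v (k - 2)) = -detZ (v (k - 2)) (v (k - 1)) :=
        detZ_anti _ _
      rw [h3]
      linarith
    · -- jj at position m-2 : triple (v (k-1), v (k+1), v (k+1+1))
      have h0v : (jj + 1).val = 0 := hlastv jj ht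
      have e1 : w jj = v (k - 1) := wlast1 jj ht
      have e2 : w (jj + 1) = v (k + 1) := wlast2 jj ht
      have e3 : w (jj + 1 + 1) = v (k + 1 + 1) := by
        rw [wlt (jj + 1) (by omega : (jj + 1).val < m - 2), h0v]
        congr 1
        push_cast
        ring
      rw [e1, e2, e3]
      have hff := hfanE (k + 1)
      rw [show k + 1 - 1 = k from by ring, h2, hsum, detZ_add_right] at hff
      have hD : 1 ≤ detZ (v (k + 1)) (v (k + 1 + 1)) := hdet (k + 1)
      have hanti : detZ (v (k + 1 + 1)) (v (k + 1)) =
          -detZ (v (k + 1)) (v (k + 1 + 1)) := detZ_anti _ _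
      rw [h3]
      linarith
  have hwfan : ∀ i : ZMod (m - 1), 1 ≤ fanF (m - 1) w i := by
    intro i
    have := G (i - 1)
    rw [show i - 1 + 1 = i from by ring] at this
    exact this
  -- numSingular
  have hnum : numSingular (m - 1) w = 2 := by
    classical
    set φ : ZMod m → ZMod (m - 1) :=
      fun j => (((j - k - 1).val : ℕ) : ZMod (m - 1)) with hφ
    have hold_ne : ∀ j : ZMod m, 2 ≤ detZ (v j) (v (j + 1)) → j ≠ k - 1 ∧ j ≠ k := by
      intro j hj
      constructor
      · rintro rfl
        rw [hk1] at hj; omega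
      · rintro rfl
        omega
    have hφval : ∀ j : ZMod m, j ≠ k - 1 → j ≠ k → (φ j).val = (j - k - 1).val := by
      intro j hj1 hj2
      exact ZMod.val_cast_of_lt (by have := tlt j hj1 hj2; omega)
    have hφrec : ∀ j : ZMod m, j ≠ k - 1 → j ≠ k →
        k + 1 + ((φ j).val : ZMod m) = j := by
      intro j hj1 hj2
      rw [hφval j hj1 hj2, ZMod.natCast_rightInverse _]
      ring
    have himg : {i : ZMod (m - 1) | 2 ≤ detZ (w i) (w (i + 1))} =
        φ '' {j : ZMod m | 2 ≤ detZ (v j) (v (j + 1))} := by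
      ext i
      simp only [Set.mem_setOf_eq, Set.mem_image]
      constructor
      · intro hi
        have hv := ZMod.val_lt i
        rcases lt_or_eq_of_le (by omega : i.val ≤ m - 2) with hil | hil
        · refine ⟨k + 1 + (i.val : ZMod m), ?_, ?_⟩
          · rw [← detlt i hil]; exact hi
          · have : k + 1 + (i.val : ZMod m) - k - 1 = ((i.val : ℕ) : ZMod m) := by ring
            rw [hφ]
            simp only
            rw [this, ZMod.val_cast_of_lt (by omega : i.val < m)]
            exact ZMod.natCast_rightInverse i
        · rw [detlast i hil] at hi; omega
      · rintro ⟨j, hj, rfl⟩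
        obtain ⟨hj1, hj2⟩ := hold_ne j hj
        have h1' : (φ j).val < m - 2 := by
          rw [hφval j hj1 hj2]; exact tlt j hj1 hj2
        rw [detlt (φ j) h1', hφrec j hj1 hj2]
        exact hj
    have hinj : Set.InjOn φ {j : ZMod m | 2 ≤ detZ (v j) (v (j + 1))} := by
      intro j hjm j' hjm' heq
      obtain ⟨hj1, hj2⟩ := hold_ne j hjm
      obtain ⟨hj1', hj2'⟩ := hold_ne j' hjm'
      have := congrArg (fun i : ZMod (m - 1) => k + 1 + (i.val : ZMod m)) heq
      rw [hφrec j hj1 hj2, hφrec j' hj1' hj2'] at this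
      exact this
    show ({i : ZMod (m - 1) | 2 ≤ detZ (w i) (w (i + 1))}).ncard = 2
    rw [himg, Set.ncard_image_of_injOn hinj]
    exact hs
  exact ⟨⟨⟨by omega, fun i => by rw [wdef i]; exact hg _, hwdet, hwcov, hwdisj⟩, hwfan⟩, hnum⟩

end TwoSing

/-- LDP fan data of length `d ≥ 4` with exactly two singular cones blows down,
through LDP fan data with exactly two singular cones, to data of length 4. -/
theorem two_singular_blowdown_chain (d : ℕ) (v : ZMod d → ℤ × ℤ)
    (hd : 4 ≤ d) (h : IsLDPFanData d v) (hs : numSingular d v = 2) :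
    ∃ V : (m : ℕ) → (ZMod m → ℤ × ℤ),
      V d = v ∧
      (∀ m, 4 ≤ m → m ≤ d → IsLDPFanData m (V m) ∧ numSingular m (V m) = 2) ∧
      (∀ m, 5 ≤ m → m ≤ d → ∃ k : ZMod m,
        V m k = V m (k - 1) + V m (k + 1) ∧
        detZ (V m (k - 1)) (V m k) = 1 ∧
        detZ (V m k) (V m (k + 1)) = 1 ∧
        V (m - 1) = deleteAt (V m) k) := by
  suffices H : ∀ n dd : ℕ, dd ≤ n → 4 ≤ dd → ∀ vv : ZMod dd → ℤ × ℤ,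
      IsLDPFanData dd vv → numSingular dd vv = 2 →
      ∃ V : (m : ℕ) → (ZMod m → ℤ × ℤ),
        V dd = vv ∧
        (∀ m, 4 ≤ m → m ≤ dd → IsLDPFanData m (V m) ∧ numSingular m (V m) = 2) ∧
        (∀ m, 5 ≤ m → m ≤ dd → ∃ k : ZMod m,
          V m k = V m (k - 1) + V m (k + 1) ∧
          detZ (V m (k - 1)) (V m k) = 1 ∧
          detZ (V m k) (V m (k + 1)) = 1 ∧
          V (m - 1) = deleteAt (V m) k) by
    exact H d d le_rfl hd v h hs
  intro n
  induction n with
  | zero => intro dd hle h4 vv _ _; omega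
  | succ n ih =>
    intro dd hle h4 vv hLDP hnum
    by_cases hd4 : dd = 4
    · subst hd4
      refine ⟨fun m' => if hm : m' = 4 then hm.symm ▸ vv else fun _ => (0, 0), ?_, ?_, ?_⟩
      · show (if hm : 4 = 4 then hm.symm ▸ vv else fun _ => (0, 0)) = vv
        rw [dif_pos rfl]
      · intro m' h4' hle'
        have : m' = 4 := by omega
        subst this
        show IsLDPFanData 4 (if hm : 4 = 4 then hm.symm ▸ vv else fun _ => (0, 0)) ∧
          numSingular 4 (if hm : 4 = 4 then hm.symm ▸ vv else fun _ => (0, 0)) = 2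
        rw [dif_pos rfl]
        exact ⟨hLDP, hnum⟩
      · intro m' h5' hle'
        omega
    · -- dd ≥ 5
      have h5 : 5 ≤ dd := by omega
      obtain ⟨k, hk1, hk2, hk3⟩ := TwoSing.exists_good dd h5 vv hLDP hnum
      have hsum : vv k = vv (k - 1) + vv (k + 1) := TwoSing.eq_sum_of_dets hk1 hk2 hk3
      obtain ⟨hLDP', hnum'⟩ := TwoSing.delete_keeps h5 vv hLDP hnum k hk1 hk2 hk3
      obtain ⟨V', hV'd, hV'a, hV'b⟩ :=
        ih (dd - 1) (by omega) (by omega) (deleteAt vv k) hLDP' hnum'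
      set V : (m : ℕ) → ZMod m → ℤ × ℤ :=
        fun m' => if hm : m' = dd then hm.symm ▸ vv else V' m' with hV
      have hVd : V dd = vv := by simp [hV]
      have hVne : ∀ m', m' ≠ dd → V m' = V' m' := by
        intro m' hne
        rw [hV]; simp only [dif_neg hne]
      refine ⟨V, hVd, ?_, ?_⟩
      · intro m' h4' hle'
        by_cases he : m' = dd
        · subst he
          rw [hVd]
          exact ⟨hLDP, hnum⟩
        · rw [hVne m' he]
          exact hV'a m' h4' (by omega)
      · intro m' h5' hle'
        by_cases he : m' = dd
        · subst he
          refine ⟨k, ?_, ?_, ?_, ?_⟩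
          · rw [hVd]; exact hsum
          · rw [hVd]; exact hk1
          · rw [hVd]; exact hk2
          · rw [hVd, hVne (m' - 1) (by omega), hV'd]
        · obtain ⟨k', hc1, hc2, hc3, hc4⟩ := hV'b m' h5' (by omega)
          refine ⟨k', ?_, ?_, ?_, ?_⟩
          · rw [hVne m' he]; exact hc1
          · rw [hVne m' he]; exact hc2
          · rw [hVne m' he]; exact hc3
          · rw [hVne m' he, hVne (m' - 1) (by omega)]; exact hc4
end
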